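/- arXiv:1709.00589 — 2 statements merged into one kernel-verified Lean document; each statement's English description precedes it below -/
import Mathlib

section
/- Every 3-ASC graph has at least 7 vertices, and there exists a 3-ASC graph with exactly 7 vertices; that is, the minimum order of a 3-ASC graph equals 7. -/
namespace AscPaper

open SimpleGraph

/-- The eccentricity of a vertex `u` in a graph `G`, as an extended natural number:
the supremum of distances from `u` to all vertices. -/
noncomputable def ecc {V : Type*} (G : SimpleGraph V) (u : V) : ℕ∞ :=
  ⨆ v, G.edist u v

/-- The radius of a graph: the minimum eccentricity over all vertices. -/
noncomputable def graphRadius {V : Type*} (G : SimpleGraph V) : ℕ∞ :=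
  ⨅ u, ecc G u

/-- The diameter of a graph: the maximum eccentricity over all vertices. -/
noncomputable def graphDiam {V : Type*} (G : SimpleGraph V) : ℕ∞ :=
  ⨆ u, ecc G u

/-- The eccentric set of `u`: all vertices at distance exactly `ecc G u` from `u`. -/
def eccSet {V : Type*} (G : SimpleGraph V) (u : V) : Set V :=
  {v | G.edist u v = ecc G u}

/-- `H` is an `r`-ASC (almost self-centered) graph: `H` is connected, has radius `r`,
and all but exactly two vertices are central (have eccentricity equal to the radius). -/
def IsASC {V : Type*} (r : ℕ) (H : SimpleGraph V) : Prop :=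
  H.Connected ∧ graphRadius H = (r : ℕ∞) ∧
    {u : V | ecc H u ≠ graphRadius H}.ncard = 2

/-- The `r`-ASC index of a graph `G`: the minimum number `k` of vertices that need to be
added to `G` so that the resulting graph is an `r`-ASC graph containing `G` as an
induced subgraph. -/
noncomputable def theta {V : Type*} (r : ℕ) (G : SimpleGraph V) : ℕ :=
  sInf {k : ℕ | ∃ H : SimpleGraph (V ⊕ Fin k), IsASC r H ∧
    ∀ u v : V, H.Adj (Sum.inl u) (Sum.inl v) ↔ G.Adj u v}

/-! ### Auxiliary distance toolkit -/

/-- The natural-number distance between two vertices, `(edist).toNat`. -/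
noncomputable def ed {V : Type} (G : SimpleGraph V) (a b : V) : ℕ := (G.edist a b).toNat

section toolkit

variable {V : Type} (G : SimpleGraph V)

lemma edist_coe (h : G.Connected) (a b : V) : G.edist a b = (ed G a b : ℕ∞) :=
  (ENat.coe_toNat (edist_ne_top_iff_reachable.mpr (h a b))).symm

lemma ed_le_walk (h : G.Connected) {a b : V} (p : G.Walk a b) : ed G a b ≤ p.length := by
  have := G.edist_le p
  rw [edist_coe G h] at this
  exact_mod_cast this

lemma ed_tri (h : G.Connected) (a b c : V) : ed G a c ≤ ed G a b + ed G b c := by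
  have := G.edist_triangle (u := a) (v := b) (w := c)
  rw [edist_coe G h, edist_coe G h, edist_coe G h] at this
  exact_mod_cast this

lemma ed_comm (a b : V) : ed G a b = ed G b a := by unfold ed; rw [edist_comm]

lemma ed_self (a : V) : ed G a a = 0 := by unfold ed; rw [edist_self]; rfl

lemma ed_eq_zero (h : G.Connected) {a b : V} (h0 : ed G a b = 0) : a = b := by
  have := edist_coe G h a b
  rw [h0] at this
  exact (edist_eq_zero_iff (G := G)).mp (by simpa using this)

lemma ed_adj (h : G.Connected) {a b : V} (hab : G.Adj a b) : ed G a b = 1 := by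
  have := edist_eq_one_iff_adj.mpr hab
  rw [edist_coe G h] at this
  exact_mod_cast this

lemma ed_walk (h : G.Connected) (a b : V) : ∃ p : G.Walk a b, p.length = ed G a b :=
  exists_walk_of_edist_eq_coe (edist_coe G h a b)

/-- Intermediate vertices on geodesics. -/
lemma ed_mid (h : G.Connected) :
    ∀ (m n : ℕ) (u v : V), ed G u v = m + n → ∃ x, ed G u x = m ∧ ed G x v = n := by
  intro m
  induction m with
  | zero => intro n u v huv; exact ⟨u, ed_self G u, by simpa using huv⟩
  | succ m ih =>
    intro n u v huv
    obtain ⟨p, hp⟩ := ed_walk G h u v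
    rw [huv] at hp
    cases p with
    | nil => simp only [Walk.length_nil] at hp; omega
    | @cons _ y _ hadj q =>
      have hq : q.length = m + n := by simpa [Nat.succ_add] using hp
      have hyv : ed G y v = m + n := by
        have h1 : ed G y v ≤ m + n := hq ▸ ed_le_walk G h q
        have h2 := ed_tri G h u y v
        rw [huv, ed_adj G h hadj] at h2
        omega
      obtain ⟨x, hx1, hx2⟩ := ih n y v hyv
      refine ⟨x, ?_, hx2⟩
      have h1 : ed G u x ≤ m + 1 := by
        have := ed_tri G h u y x
        rw [ed_adj G h hadj, hx1] at this
        omega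
      have h2 := ed_tri G h u x v
      rw [huv, hx2] at h2
      omega

lemma ecc_ge (u v : V) : G.edist u v ≤ ecc G u := le_iSup _ v

lemma noncentral_of (h : G.Connected) (hrad : graphRadius G = 3) {u v : V}
    (h4 : 4 ≤ ed G u v) : ecc G u ≠ graphRadius G := by
  rw [hrad]
  intro heq
  have h1 : G.edist u v ≤ 3 := heq ▸ ecc_ge G u v
  rw [edist_coe G h] at h1
  have : ed G u v ≤ 3 := by exact_mod_cast h1
  omega

lemma exists_far (h : G.Connected) (hrad : graphRadius G = 3) (u : V) :
    ∃ v, 3 ≤ ed G u v := by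
  have h3 : (3 : ℕ∞) ≤ ecc G u := hrad ▸ iInf_le _ u
  have h2 : (2 : ℕ∞) < ecc G u := lt_of_lt_of_le (by norm_num) h3
  obtain ⟨v, hv⟩ := lt_iSup_iff.mp h2
  rw [edist_coe G h] at hv
  exact ⟨v, by exact_mod_cast hv⟩

lemma exists_far4 (h : G.Connected) (hrad : graphRadius G = 3) {u : V}
    (hu : ecc G u ≠ graphRadius G) : ∃ v, 4 ≤ ed G u v := by
  have h3 : (3 : ℕ∞) ≤ ecc G u := hrad ▸ iInf_le _ u
  have h2 : (3 : ℕ∞) < ecc G u := lt_of_le_of_ne h3 (fun hh => hu (hh ▸ hrad.symm ▸ rfl))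
  obtain ⟨v, hv⟩ := lt_iSup_iff.mp h2
  rw [edist_coe G h] at hv
  exact ⟨v, by exact_mod_cast hv⟩

lemma pendant (h : G.Connected) {w x0 : V} (huniq : ∀ y, G.Adj w y → y = x0) {v : V}
    (hne : w ≠ v) : ed G x0 v + 1 ≤ ed G w v := by
  obtain ⟨p, hp⟩ := ed_walk G h w v
  cases p with
  | nil => exact absurd rfl hne
  | @cons _ y _ hadj q =>
    have := huniq y hadj
    subst this
    have := ed_le_walk G h q
    simp only [Walk.length_cons] at hp
    omega

lemma exists_nbr (h : G.Connected) {w v : V} (hne : w ≠ v) : ∃ y, G.Adj w y := by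
  obtain ⟨p, hp⟩ := ed_walk G h w v
  cases p with
  | nil => exact absurd rfl hne
  | cons hadj q => exact ⟨_, hadj⟩

/-- If `w` is a pendant vertex attached at `x0`, where `ed x0 x3 = 3` and
`ed x0 x4 = 4`, then there are at least `4` non-central vertices. -/
lemma four_noncentral [Fintype V] (h : G.Connected) (hrad : graphRadius G = 3)
    (x0 x3 x4 w : V) (d03 : ed G x0 x3 = 3) (d04 : ed G x0 x4 = 4)
    (hadj : G.Adj w x0) (huniq : ∀ y, G.Adj w y → y = x0) :
    4 ≤ {u | ecc G u ≠ graphRadius G}.ncard := by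
  classical
  have hw3 : w ≠ x3 := by
    rintro rfl
    rw [ed_comm, ed_adj G h hadj] at d03; omega
  have hw4 : w ≠ x4 := by
    rintro rfl
    rw [ed_comm, ed_adj G h hadj] at d04; omega
  have h3w : 4 ≤ ed G w x3 := by have := pendant G h huniq hw3; omega
  have h4w : 5 ≤ ed G w x4 := by have := pendant G h huniq hw4; omega
  have m0 : ecc G x0 ≠ graphRadius G := noncentral_of G h hrad (v := x4) (by omega)
  have m3 : ecc G x3 ≠ graphRadius G := by
    refine noncentral_of G h hrad (v := w) ?_
    rw [ed_comm]; omega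
  have m4 : ecc G x4 ≠ graphRadius G := by
    refine noncentral_of G h hrad (v := w) ?_
    rw [ed_comm]; omega
  have mw : ecc G w ≠ graphRadius G := noncentral_of G h hrad (v := x4) (by omega)
  have n03 : x0 ≠ x3 := fun he => by rw [he, ed_self] at d03; omega
  have n04 : x0 ≠ x4 := fun he => by rw [he, ed_self] at d04; omega
  have n34 : x3 ≠ x4 := fun he => by rw [he] at d03; omega
  have nw0 : w ≠ x0 := hadj.ne
  have hsub : ({x0, x3, x4, w} : Set V) ⊆ {u | ecc G u ≠ graphRadius G} := by
    rintro u (rfl | rfl | rfl | rfl) <;> assumption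
  have hcard : ({x0, x3, x4, w} : Set V).ncard = 4 := by
    rw [Set.ncard_insert_of_notMem (by simp [n03, n04, nw0.symm]) (Set.toFinite _),
        Set.ncard_insert_of_notMem (by simp [n34, hw3.symm]) (Set.toFinite _),
        Set.ncard_pair hw4.symm]
  calc 4 = ({x0, x3, x4, w} : Set V).ncard := hcard.symm
    _ ≤ _ := Set.ncard_le_ncard hsub (Set.toFinite _)

/-- Every 3-ASC graph has at least 7 vertices. -/
lemma lower_bound {V : Type} [Fintype V] (G : SimpleGraph V) (h : G.Connected)
    (hrad : graphRadius G = 3)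
    (hn : {u : V | ecc G u ≠ graphRadius G}.ncard = 2) : 7 ≤ Fintype.card V := by
  classical
  by_contra hlt
  push_neg at hlt
  have hne : {u : V | ecc G u ≠ graphRadius G}.Nonempty := by
    rw [← Set.ncard_pos (Set.toFinite _)] at *
    omega
  obtain ⟨x0, hx0⟩ := hne
  obtain ⟨v0, hv0⟩ := exists_far4 G h hrad hx0
  obtain ⟨x4, d04, -⟩ := ed_mid G h 4 (ed G x0 v0 - 4) x0 v0 (by omega)
  obtain ⟨x2, d02, d24⟩ := ed_mid G h 2 2 x0 x4 d04
  obtain ⟨x1, d01, d12⟩ := ed_mid G h 1 1 x0 x2 d02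
  obtain ⟨x3, d23, d34⟩ := ed_mid G h 1 1 x2 x4 d24
  have d03 : ed G x0 x3 = 3 := by
    have h1 := ed_tri G h x0 x2 x3
    have h2 := ed_tri G h x0 x3 x4
    omega
  have d14 : ed G x1 x4 = 3 := by
    have h1 := ed_tri G h x1 x2 x4
    have h2 := ed_tri G h x0 x1 x4
    omega
  have d13 : ed G x1 x3 = 2 := by
    have h1 := ed_tri G h x1 x2 x3
    have h2 := ed_tri G h x1 x3 x4
    omega
  obtain ⟨w, hw⟩ := exists_far G h hrad x2
  have d20 : ed G x2 x0 = 2 := by rw [ed_comm]; exact d02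
  have d21 : ed G x2 x1 = 1 := by rw [ed_comm]; exact d12
  have nw0 : w ≠ x0 := fun he => by rw [he] at hw; omega
  have nw1 : w ≠ x1 := fun he => by rw [he] at hw; omega
  have nw2 : w ≠ x2 := fun he => by rw [he, ed_self] at hw; omega
  have nw3 : w ≠ x3 := fun he => by rw [he] at hw; omega
  have nw4 : w ≠ x4 := fun he => by rw [he] at hw; omega
  have n01 : x0 ≠ x1 := fun he => by rw [← he, ed_self] at d01; omega
  have n02 : x0 ≠ x2 := fun he => by rw [← he, ed_self] at d02; omega
  have n03 : x0 ≠ x3 := fun he => by rw [← he, ed_self] at d03; omega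
  have n04 : x0 ≠ x4 := fun he => by rw [← he, ed_self] at d04; omega
  have n12 : x1 ≠ x2 := fun he => by rw [← he, ed_self] at d12; omega
  have n13 : x1 ≠ x3 := fun he => by rw [← he, ed_self] at d13; omega
  have n14 : x1 ≠ x4 := fun he => by rw [← he, ed_self] at d14; omega
  have n23 : x2 ≠ x3 := fun he => by rw [← he, ed_self] at d23; omega
  have n24 : x2 ≠ x4 := fun he => by rw [← he, ed_self] at d24; omega
  have n34 : x3 ≠ x4 := fun he => by rw [← he, ed_self] at d34; omega
  set s : Finset V := {x0, x1, x2, x3, x4, w} with hs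
  have hcard : s.card = 6 := by
    rw [hs]
    rw [Finset.card_insert_of_notMem (by simp [n01, n02, n03, n04, nw0.symm]),
        Finset.card_insert_of_notMem (by simp [n12, n13, n14, nw1.symm]),
        Finset.card_insert_of_notMem (by simp [n23, n24, nw2.symm]),
        Finset.card_insert_of_notMem (by simp [n34, nw3.symm]),
        Finset.card_insert_of_notMem (by simp [nw4.symm]),
        Finset.card_singleton]
  have huniv : ∀ v : V, v ∈ s := by
    have hle : s.card ≤ Fintype.card V := Finset.card_le_univ s
    have : s.card = Fintype.card V := by omega
    exact fun v => (Finset.eq_univ_of_card s this) ▸ Finset.mem_univ v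
  have hnbr : ∀ y, G.Adj w y → y = x0 ∨ y = x4 := by
    intro y hy
    have hyd : 2 ≤ ed G x2 y := by
      have h1 := ed_tri G h x2 y w
      rw [ed_comm G y w, ed_adj G h hy] at h1
      omega
    have := huniv y
    rw [hs] at this
    simp only [Finset.mem_insert, Finset.mem_singleton] at this
    rcases this with rfl | rfl | rfl | rfl | rfl | rfl
    · exact Or.inl rfl
    · rw [d21] at hyd; omega
    · rw [ed_self] at hyd; omega
    · rw [d23] at hyd; omega
    · exact Or.inr rfl
    · exact absurd (ed_adj G h hy) (by rw [ed_self]; omega)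
  obtain ⟨y, hy⟩ := exists_nbr G h nw2
  have hnotboth : ¬ (G.Adj w x0 ∧ G.Adj w x4) := by
    rintro ⟨ha, hb⟩
    have h1 := ed_tri G h x0 w x4
    rw [ed_comm G x0 w, ed_adj G h ha, ed_adj G h hb] at h1
    omega
  have hfour : 4 ≤ {u : V | ecc G u ≠ graphRadius G}.ncard := by
    rcases hnbr y hy with heq | heq <;> rw [heq] at hy
    · refine four_noncentral G h hrad x0 x3 x4 w d03 d04 hy ?_
      intro z hz
      rcases hnbr z hz with heq | heq
      · exact heq
      · subst heq; exact absurd ⟨hy, hz⟩ hnotboth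
    · have d41 : ed G x4 x1 = 3 := by rw [ed_comm]; exact d14
      have d40 : ed G x4 x0 = 4 := by rw [ed_comm]; exact d04
      refine four_noncentral G h hrad x4 x1 x0 w d41 d40 hy ?_
      intro z hz
      rcases hnbr z hz with heq | heq
      · subst heq; exact absurd ⟨hz, hy⟩ hnotboth
      · exact heq
  omega

end toolkit

/-! ### Certified distance computation -/

section certify

variable {V : Type} (G : SimpleGraph V)

lemma lip_walk (f : V → ℕ) (hf : ∀ a b, G.Adj a b → f b ≤ f a + 1) :
    ∀ {u v : V} (p : G.Walk u v), f v ≤ f u + p.length := by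
  intro u v p
  induction p with
  | nil => simp
  | @cons a y b hadj q ih =>
    have := hf a y hadj
    simp only [Walk.length_cons]
    omega

lemma edist_lower (f : V → ℕ) (hf : ∀ a b, G.Adj a b → f b ≤ f a + 1) {u : V}
    (h0 : f u = 0) (v : V) : (f v : ℕ∞) ≤ G.edist u v := by
  rw [edist_eq_sInf]
  refine le_sInf ?_
  rintro _ ⟨p, rfl⟩
  have := lip_walk G f hf p
  rw [h0] at this
  show (f v : ℕ∞) ≤ (p.length : ℕ∞)
  have h2 : f v ≤ p.length := by omega
  exact_mod_cast h2

lemma edist_upper (f : V → ℕ) {u : V}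
    (hstep : ∀ a, a ≠ u → ∃ b, G.Adj b a ∧ f b + 1 = f a) (v : V) :
    G.edist u v ≤ (f v : ℕ∞) := by
  have key : ∀ (n : ℕ) (a : V), f a ≤ n → G.edist u a ≤ (f a : ℕ∞) := by
    intro n
    induction n with
    | zero =>
      intro a ha
      rcases eq_or_ne a u with rfl | hne
      · simp [edist_self]
      · obtain ⟨b, -, hb⟩ := hstep a hne
        omega
    | succ n ih =>
      intro a ha
      rcases eq_or_ne a u with rfl | hne
      · simp [edist_self]
      · obtain ⟨b, hadj, hb⟩ := hstep a hne
        have hfb : f b ≤ n := by omega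
        calc G.edist u a ≤ G.edist u b + G.edist b a := G.edist_triangle
          _ ≤ (f b : ℕ∞) + 1 := by
              exact add_le_add (ih b hfb) (le_of_eq (edist_eq_one_iff_adj.mpr hadj))
          _ = (f a : ℕ∞) := by rw [← hb]; push_cast; ring
  exact key (f v) v le_rfl

lemma edist_eq_of (f : V → ℕ) (hf : ∀ a b, G.Adj a b → f b ≤ f a + 1) {u : V}
    (h0 : f u = 0) (hstep : ∀ a, a ≠ u → ∃ b, G.Adj b a ∧ f b + 1 = f a) (v : V) :
    G.edist u v = (f v : ℕ∞) :=
  le_antisymm (edist_upper G f hstep v) (edist_lower G f hf h0 v)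

end certify

/-! ### A 3-ASC graph on seven vertices -/

/-- The adjacency matrix of a 3-ASC graph on seven vertices
(edges 04, 05, 06, 13, 15, 23, 24). -/
def A7 : Fin 7 → Fin 7 → Bool :=
  ![![false, false, false, false, true,  true,  true ],
    ![false, false, false, true,  false, true,  false],
    ![false, false, false, true,  true,  false, false],
    ![false, true,  true,  false, false, false, false],
    ![true,  false, true,  false, false, false, false],
    ![true,  true,  false, false, false, false, false],
    ![true,  false, false, false, false, false, false]]

/-- A 3-ASC graph on seven vertices. -/
def G7 : SimpleGraph (Fin 7) where
  Adj a b := A7 a b = true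
  symm := by constructor; intro a b; fin_cases a <;> fin_cases b <;> decide
  loopless := by constructor; intro a; fin_cases a <;> decide

instance : DecidableRel G7.Adj := fun a b => instDecidableEqBool (A7 a b) true

/-- The distance matrix of `G7`. -/
def D7 : Fin 7 → Fin 7 → ℕ :=
  ![![0,2,2,3,1,1,1],
    ![2,0,2,1,3,1,3],
    ![2,2,0,1,1,3,3],
    ![3,1,1,0,2,2,4],
    ![1,3,1,2,0,2,2],
    ![1,1,3,2,2,0,2],
    ![1,3,3,4,2,2,0]]

lemma G7_edist (u v : Fin 7) : G7.edist u v = (D7 u v : ℕ∞) :=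
  edist_eq_of G7 (D7 u)
    ((by decide : ∀ u a b, G7.Adj a b → D7 u b ≤ D7 u a + 1) u)
    ((by decide : ∀ u, D7 u u = 0) u)
    ((by decide : ∀ u a, a ≠ u → ∃ b, G7.Adj b a ∧ D7 u b + 1 = D7 u a) u) v

/-- The eccentricities of the vertices of `G7`. -/
def E7 : Fin 7 → ℕ := ![3,3,3,4,3,3,4]

/-- Witnesses for the eccentricities of `G7`. -/
def W7 : Fin 7 → Fin 7 := ![3,4,5,6,1,2,3]

lemma G7_ecc (u : Fin 7) : ecc G7 u = (E7 u : ℕ∞) := by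
  refine le_antisymm (iSup_le fun v => ?_) ?_
  · rw [G7_edist]
    have : D7 u v ≤ E7 u := by revert u v; decide
    exact_mod_cast this
  · have h1 : G7.edist u (W7 u) = (E7 u : ℕ∞) := by
      rw [G7_edist]
      have : D7 u (W7 u) = E7 u := by revert u; decide
      rw [this]
    exact h1 ▸ le_iSup (fun v => G7.edist u v) (W7 u)

lemma G7_radius : graphRadius G7 = 3 := by
  refine le_antisymm (le_trans (iInf_le _ 0) ?_) (le_iInf fun u => ?_)
  · rw [G7_ecc]; decide
  · rw [G7_ecc]
    fin_cases u <;> decide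

lemma G7_connected : G7.Connected :=
  ⟨fun u v => reachable_of_edist_ne_top (by rw [G7_edist]; exact ENat.coe_ne_top _)⟩

lemma G7_noncentral : {u : Fin 7 | ecc G7 u ≠ graphRadius G7} = {3, 6} := by
  ext u
  simp only [Set.mem_setOf_eq, G7_ecc, G7_radius, Set.mem_insert_iff, Set.mem_singleton_iff]
  fin_cases u <;> decide

lemma G7_isASC : IsASC 3 G7 := by
  refine ⟨G7_connected, G7_radius, ?_⟩
  rw [G7_noncentral]
  exact Set.ncard_pair (by decide)

/-- Every 3-ASC graph has at least 7 vertices, and there exists a 3-ASC graph with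
exactly 7 vertices: the minimum order of a 3-ASC graph equals 7. -/
theorem min_order_three_ASC :
    (∀ (V : Type) [Fintype V] (H : SimpleGraph V), IsASC 3 H → 7 ≤ Fintype.card V) ∧
    (∃ H : SimpleGraph (Fin 7), IsASC 3 H) := by
  constructor
  · intro V _ H hH
    obtain ⟨hconn, hrad, hn⟩ := hH
    exact lower_bound H hconn (by exact_mod_cast hrad) hn
  · exact ⟨G7, G7_isASC⟩

end AscPaper
end

section
/- For every integer t ≥ 3, the 3-ASC index of the graph K_1 ⊕ tP_2 (the join of a single vertex with the disjoint union of t copies of P_2) equals 4, i.e., θ_3(K_1 ⊕ tP_2) = 4. -/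
namespace AscPaper

open SimpleGraph

/-- The join `K_1 ⊕ tP_2` of a single vertex with the disjoint union of `t` copies of
`P_2`: the vertex `none` is joined to all other vertices, and `some (i, a)` is adjacent
to `some (j, b)` exactly when `i = j` and `a ≠ b`. -/
def K1JoinTP2 (t : ℕ) : SimpleGraph (Option (Fin t × Fin 2)) :=
  SimpleGraph.fromRel (fun x y => x = none ∨ ∃ i a b, x = some (i, a) ∧ y = some (i, b))

open Sum



section Helpers
variable {V : Type*} {G : SimpleGraph V} {u v w p : V}

lemma edist_le_one_of_adj (h : G.Adj u v) : G.edist u v ≤ 1 :=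
  (edist_eq_one_iff_adj.mpr h).le

lemma edist_le_add_one (h : G.Adj u w) {n : ℕ∞} (hd : G.edist w v ≤ n) :
    G.edist u v ≤ n + 1 := by
  calc G.edist u v ≤ G.edist u w + G.edist w v := SimpleGraph.edist_triangle
    _ ≤ 1 + n := add_le_add (edist_le_one_of_adj h) hd
    _ = n + 1 := by rw [add_comm]

lemma two_le_edist (hne : u ≠ v) (hadj : ¬ G.Adj u v) : 2 ≤ G.edist u v := by
  have h1 : (1 : ℕ∞) ≤ G.edist u v := by
    rw [ENat.one_le_iff_ne_zero]
    simp [edist_eq_zero_iff, hne]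
  have h2 : G.edist u v ≠ 1 := fun h => hadj (edist_eq_one_iff_adj.mp h)
  have : (1 : ℕ∞) < G.edist u v := lt_of_le_of_ne h1 (Ne.symm h2)
  have h4 := Order.add_one_le_of_lt this
  rw [one_add_one_eq_two] at h4
  exact h4

lemma le_edist_succ (hne : u ≠ v) {n : ℕ∞} (h : ∀ w, G.Adj u w → n ≤ G.edist w v) :
    n + 1 ≤ G.edist u v := by
  rcases eq_or_ne (G.edist u v) ⊤ with h' | h'
  · rw [h']; exact le_top
  · obtain ⟨q, hq⟩ := exists_walk_of_edist_ne_top h'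
    cases q with
    | nil => exact absurd rfl hne
    | @cons _ w _ hadj q =>
        have h1 := h _ hadj
        have h2 : G.edist w v ≤ (q.length : ℕ∞) := edist_le q
        rw [← hq]
        simp only [Walk.length_cons, Nat.cast_add, Nat.cast_one]
        exact add_le_add_left (h1.trans h2) 1

lemma three_le_edist (hne : u ≠ v) (hadj : ¬G.Adj u v)
    (h : ∀ w, G.Adj u w → ¬ G.Adj w v) : 3 ≤ G.edist u v := by
  have : (2 : ℕ∞) + 1 ≤ G.edist u v :=
    le_edist_succ hne (fun w hw => two_le_edist (fun he => hadj (he ▸ hw)) (h w hw))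
  have h3 : (2:ℕ∞) + 1 = 3 := by norm_num
  rw [h3] at this
  exact this

lemma exists_adj_closer (hne : u ≠ v) (hfin : G.edist u v ≠ ⊤) :
    ∃ w, G.Adj w v ∧ G.edist u w + 1 ≤ G.edist u v := by
  have hfin' : G.edist v u ≠ ⊤ := by rwa [edist_comm]
  obtain ⟨q, hq⟩ := exists_walk_of_edist_ne_top hfin'
  cases q with
  | nil => exact absurd rfl hne.symm
  | @cons _ w _ hadj q =>
      refine ⟨w, hadj.symm, ?_⟩
      have h2 : G.edist u w ≤ (q.length : ℕ∞) := by rw [edist_comm]; exact edist_le q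
      have h3 : G.edist u v = ((Walk.cons hadj q).length : ℕ∞) := by
        rw [edist_comm]; exact hq.symm
      rw [h3]
      simp only [Walk.length_cons, Nat.cast_add, Nat.cast_one]
      exact add_le_add_left h2 1

lemma edist_pendant (hadj : G.Adj w p) (huniq : ∀ z, G.Adj p z → z = w) (hne : v ≠ p) :
    G.edist v p = G.edist v w + 1 := by
  refine le_antisymm ?_ ?_
  · calc G.edist v p ≤ G.edist v w + G.edist w p := SimpleGraph.edist_triangle
      _ ≤ G.edist v w + 1 := add_le_add_right (edist_le_one_of_adj hadj) _
  · have : G.edist v w + 1 ≤ G.edist p v := by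
      refine le_edist_succ hne.symm (fun z hz => ?_)
      rw [huniq z hz, SimpleGraph.edist_comm]
    calc G.edist v w + 1 ≤ G.edist p v := this
      _ = G.edist v p := edist_comm


lemma ecc_le_iff {n : ℕ∞} : ecc G u ≤ n ↔ ∀ v, G.edist u v ≤ n := iSup_le_iff

lemma edist_le_ecc : G.edist u v ≤ ecc G u := le_iSup _ v

lemma graphRadius_le_ecc : graphRadius G ≤ ecc G u := iInf_le _ _

lemma enat_le_two_of_not (d : ℕ∞) (h : ¬ (3 ≤ d)) : d ≤ 2 := by
  rw [not_le] at h
  have : (3 : ℕ∞) = 2 + 1 := by norm_num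
  rw [this, ENat.lt_add_one_iff (by norm_num)] at h
  exact h

lemma enat_le_one_of_not (d : ℕ∞) (h : ¬ (2 ≤ d)) : d ≤ 1 := by
  rw [not_le] at h
  have : (2 : ℕ∞) = 1 + 1 := by norm_num
  rw [this, ENat.lt_add_one_iff (by norm_num)] at h
  exact h

lemma walk_closed_aux (S : Set V) (hcl : ∀ a ∈ S, ∀ b, G.Adj a b → b ∈ S) :
    ∀ {x y : V}, G.Walk x y → x ∉ S → y ∈ S → False := by
  intro x y q
  induction q with
  | nil => exact fun hx hy => hx hy
  | @cons a b c hadj q ih =>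
      intro hx hy
      by_cases hS : b ∈ S
      · exact hx (hcl b hS a hadj.symm)
      · exact ih hS hy

lemma not_reachable_of_closed (S : Set V) (hu : u ∉ S) (hv : v ∈ S)
    (hcl : ∀ a ∈ S, ∀ b, G.Adj a b → b ∈ S) : ¬ G.Reachable u v := by
  intro h
  obtain ⟨q⟩ := h
  exact walk_closed_aux S hcl q hu hv

end Helpers



section Gadj
variable {t : ℕ}

lemma adjG_none (p : Fin t × Fin 2) : (K1JoinTP2 t).Adj none (some p) := by
  simp [K1JoinTP2, fromRel_adj]

lemma adjG_some_some {i j : Fin t} {a b : Fin 2} :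
    (K1JoinTP2 t).Adj (some (i,a)) (some (j,b)) ↔ i = j ∧ a ≠ b := by
  simp only [K1JoinTP2, fromRel_adj]
  constructor
  · rintro ⟨hne, (h|⟨i',a',b',h1,h2⟩)|(h|⟨i',a',b',h1,h2⟩)⟩
    · simp at h
    · simp only [Option.some.injEq, Prod.mk.injEq] at h1 h2
      obtain ⟨rfl, rfl⟩ := h1
      obtain ⟨rfl, rfl⟩ := h2
      exact ⟨rfl, fun hab => hne (by simp [hab])⟩
    · simp at h
    · simp only [Option.some.injEq, Prod.mk.injEq] at h1 h2
      obtain ⟨rfl, rfl⟩ := h1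
      obtain ⟨rfl, rfl⟩ := h2
      exact ⟨rfl, fun hab => hne (by simp [hab])⟩
  · rintro ⟨rfl, hab⟩
    exact ⟨by simp [hab, Prod.ext_iff], Or.inl (Or.inr ⟨i, a, b, rfl, rfl⟩)⟩

lemma adjG_cases {u v : Option (Fin t × Fin 2)} (h : (K1JoinTP2 t).Adj u v) :
    (u = none ∧ v ≠ none) ∨ (v = none ∧ u ≠ none) ∨
      (∃ i a, u = some (i, a) ∧ v = some (i, a + 1)) := by
  match u, v with
  | none, none => exact absurd rfl h.ne
  | none, some p => exact Or.inl ⟨rfl, by simp⟩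
  | some p, none => exact Or.inr (Or.inl ⟨rfl, by simp⟩)
  | some (i,a), some (j,b) =>
      obtain ⟨rfl, hab⟩ := adjG_some_some.mp h
      refine Or.inr (Or.inr ⟨i, a, rfl, ?_⟩)
      have h2 : ∀ a b : Fin 2, b ≠ a → b = a + 1 := by decide
      rw [h2 a b hab.symm]

lemma fin2_succ_ne (a : Fin 2) : a + 1 ≠ a := by revert a; decide

lemma adjG_partner {i : Fin t} {a : Fin 2} :
    (K1JoinTP2 t).Adj (some (i,a)) (some (i,a+1)) :=
  adjG_some_some.mpr ⟨rfl, (fin2_succ_ne a).symm⟩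

end Gadj

section Lower
open Sum

variable {t k : ℕ} {H : SimpleGraph (Option (Fin t × Fin 2) ⊕ Fin k)}

/-- adjacency between old vertices -/
lemma hOld (hind : ∀ u v, H.Adj (inl u) (inl v) ↔ (K1JoinTP2 t).Adj u v)
    {u v : Option (Fin t × Fin 2)} : H.Adj (inl u) (inl v) ↔ (K1JoinTP2 t).Adj u v :=
  hind u v

lemma c_adj_leaf (hind : ∀ u v, H.Adj (inl u) (inl v) ↔ (K1JoinTP2 t).Adj u v)
    (p : Fin t × Fin 2) : H.Adj (inl none) (inl (some p)) :=
  (hind _ _).mpr (adjG_none p)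

lemma d_c_old (hind : ∀ u v, H.Adj (inl u) (inl v) ↔ (K1JoinTP2 t).Adj u v)
    (x : Option (Fin t × Fin 2)) : H.edist (inl none) (inl x) ≤ 1 := by
  cases x with
  | none => rw [edist_self]; exact zero_le_one
  | some p => exact edist_le_one_of_adj (c_adj_leaf hind p)

lemma d_old_c (hind : ∀ u v, H.Adj (inl u) (inl v) ↔ (K1JoinTP2 t).Adj u v)
    (x : Option (Fin t × Fin 2)) : H.edist (inl x) (inl none) ≤ 1 := by
  rw [edist_comm]; exact d_c_old hind x

lemma d_old_old (hind : ∀ u v, H.Adj (inl u) (inl v) ↔ (K1JoinTP2 t).Adj u v)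
    (x y : Option (Fin t × Fin 2)) : H.edist (inl x) (inl y) ≤ 2 := by
  calc H.edist (inl x) (inl y) ≤ H.edist (inl x) (inl none) + H.edist (inl none) (inl y) :=
        SimpleGraph.edist_triangle
    _ ≤ 1 + 1 := add_le_add (d_old_c hind x) (d_c_old hind y)
    _ = 2 := one_add_one_eq_two

lemma ecc_ge3 (hrad : graphRadius H = 3) (v : Option (Fin t × Fin 2) ⊕ Fin k) :
    3 ≤ ecc H v := hrad ▸ graphRadius_le_ecc

lemma not_all_le_two (hrad : graphRadius H = 3) (v : Option (Fin t × Fin 2) ⊕ Fin k)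
    (h : ∀ w, H.edist v w ≤ 2) : False := by
  have h3 := ecc_ge3 hrad v
  have h2 : ecc H v ≤ 2 := ecc_le_iff.mpr h
  have : (3 : ℕ∞) ≤ 2 := h3.trans h2
  norm_num at this

lemma exists_far_s19 (hrad : graphRadius H = 3) (v : Option (Fin t × Fin 2) ⊕ Fin k) :
    ∃ w, 3 ≤ H.edist v w := by
  by_contra h
  push_neg at h
  exact not_all_le_two hrad v (fun w => enat_le_two_of_not _ (not_le.mpr (h w)))

lemma far_no_old (hind : ∀ u v, H.Adj (inl u) (inl v) ↔ (K1JoinTP2 t).Adj u v)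
    {v : Option (Fin t × Fin 2) ⊕ Fin k} (hf : 3 ≤ H.edist (inl none) v)
    (x : Option (Fin t × Fin 2)) : ¬ H.Adj v (inl x) := by
  intro h
  have h1 : H.edist v (inl none) ≤ 1 + 1 := edist_le_add_one h (d_old_c hind x)
  have h2 : H.edist (inl none) v ≤ 1 + 1 := by rw [edist_comm]; exact h1
  have : (3:ℕ∞) ≤ 1 + 1 := hf.trans h2
  norm_num at this

lemma hfin (hconn : H.Connected) (u v : Option (Fin t × Fin 2) ⊕ Fin k) :
    H.edist u v ≠ ⊤ := edist_ne_top_iff_reachable.mpr (hconn u v)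

lemma ecc_ne_rad_of_ge4 (hrad : graphRadius H = 3) {v : Option (Fin t × Fin 2) ⊕ Fin k}
    (h4 : 4 ≤ ecc H v) : ecc H v ≠ graphRadius H := by
  rw [hrad]
  intro h
  rw [h] at h4
  norm_num at h4

lemma three_noncentral (hrad : graphRadius H = 3)
    (hcard : {u : Option (Fin t × Fin 2) ⊕ Fin k | ecc H u ≠ graphRadius H}.ncard = 2)
    {a b c : Option (Fin t × Fin 2) ⊕ Fin k} (hab : a ≠ b) (hac : a ≠ c) (hbc : b ≠ c)
    (ha : 4 ≤ ecc H a) (hb : 4 ≤ ecc H b) (hc : 4 ≤ ecc H c) : False := by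
  have hsub : {a, b, c} ⊆ {u : Option (Fin t × Fin 2) ⊕ Fin k | ecc H u ≠ graphRadius H} := by
    rintro z (rfl | rfl | rfl)
    · exact ecc_ne_rad_of_ge4 hrad ha
    · exact ecc_ne_rad_of_ge4 hrad hb
    · exact ecc_ne_rad_of_ge4 hrad hc
  have h3 : ({a, b, c} : Set _).ncard = 3 := by
    rw [Set.ncard_insert_of_notMem (by simp [hab, hac]) (Set.toFinite _),
      Set.ncard_insert_of_notMem (by simp [hbc]) (Set.toFinite _), Set.ncard_singleton]
  have := Set.ncard_le_ncard hsub (Set.toFinite _)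
  rw [h3, hcard] at this
  norm_num at this

lemma pair_central (hrad : graphRadius H = 3)
    (hcard : {u : Option (Fin t × Fin 2) ⊕ Fin k | ecc H u ≠ graphRadius H}.ncard = 2)
    {a b : Option (Fin t × Fin 2) ⊕ Fin k} (hab : a ≠ b)
    (ha : 4 ≤ ecc H a) (hb : 4 ≤ ecc H b)
    {z : Option (Fin t × Fin 2) ⊕ Fin k} (hza : z ≠ a) (hzb : z ≠ b) : ecc H z = 3 := by
  by_contra h
  have h4 : 4 ≤ ecc H z := by
    rcases lt_or_ge (ecc H z) 4 with h' | h'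
    · exfalso
      have h3 := ecc_ge3 hrad z
      have : ecc H z = 3 := le_antisymm (by
        have : (4:ℕ∞) = 3 + 1 := by norm_num
        rw [this, ENat.lt_add_one_iff (by norm_num)] at h'
        exact h') h3
      exact h this
    · exact h'
  exact three_noncentral hrad hcard hza hzb hab h4 ha hb

lemma no_noncentral (hrad : graphRadius H = 3)
    (hcard : {u : Option (Fin t × Fin 2) ⊕ Fin k | ecc H u ≠ graphRadius H}.ncard = 2)
    (h : ∀ v, ecc H v ≤ 3) : False := by
  have : {u : Option (Fin t × Fin 2) ⊕ Fin k | ecc H u ≠ graphRadius H} = ∅ := by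
    ext z
    simp only [Set.mem_setOf_eq, Set.mem_empty_iff_false, iff_false, not_not]
    rw [hrad]
    exact le_antisymm (h z) (ecc_ge3 hrad z)
  rw [this] at hcard
  simp at hcard

lemma leaf_old_nbrs (hind : ∀ u v, H.Adj (inl u) (inl v) ↔ (K1JoinTP2 t).Adj u v)
    {i : Fin t} {a : Fin 2} {z : Option (Fin t × Fin 2)}
    (h : H.Adj (inl (some (i,a))) (inl z)) : z = none ∨ z = some (i, a+1) := by
  rcases adjG_cases ((hind _ _).mp h) with ⟨h1, -⟩ | ⟨h1, -⟩ | ⟨i', a', h1, h2⟩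
  · simp at h1
  · exact Or.inl h1
  · simp only [Option.some.injEq, Prod.mk.injEq] at h1
    obtain ⟨rfl, rfl⟩ := h1
    exact Or.inr h2

lemma partner_adj (hind : ∀ u v, H.Adj (inl u) (inl v) ↔ (K1JoinTP2 t).Adj u v)
    (i : Fin t) (a : Fin 2) : H.Adj (inl (some (i,a))) (inl (some (i,a+1))) :=
  (hind _ _).mpr adjG_partner

end Lower


section K012
open Sum

lemma enat_peel {a b : ℕ∞} (h : a + 1 ≤ b + 1) : a ≤ b :=
  (WithTop.add_le_add_iff_right (by norm_num : (1:ℕ∞) ≠ ⊤)).mp h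

lemma fin2_cover : ∀ f o j : Fin 2, f ≠ o → (j = f ∨ j = o) := by decide

lemma fin3_cover : ∀ a b c j : Fin 3, a ≠ b → a ≠ c → b ≠ c → (j = a ∨ j = b ∨ j = c) := by
  decide

variable {t : ℕ}

lemma no0 {H : SimpleGraph (Option (Fin t × Fin 2) ⊕ Fin 0)}
    (hrad : graphRadius H = 3)
    (hind : ∀ u v, H.Adj (inl u) (inl v) ↔ (K1JoinTP2 t).Adj u v) : False := by
  apply not_all_le_two hrad (inl none)
  rintro (x | j)
  · exact (d_c_old hind x).trans (by norm_num)
  · exact j.elim0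

lemma no1 {H : SimpleGraph (Option (Fin t × Fin 2) ⊕ Fin 1)}
    (hconn : H.Connected) (hrad : graphRadius H = 3)
    (hind : ∀ u v, H.Adj (inl u) (inl v) ↔ (K1JoinTP2 t).Adj u v) : False := by
  obtain ⟨w, hw⟩ := exists_far_s19 hrad (inl none)
  rcases w with x | j
  · have := hw.trans (d_c_old hind x); norm_num at this
  · obtain ⟨z, hz, -⟩ := exists_adj_closer (by simp) (hfin hconn (inl none) (inr j))
    rcases z with x | j'
    · exact far_no_old hind hw x hz.symm
    · have hj : j' = j := Subsingleton.elim _ _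
      rw [hj] at hz
      exact hz.ne rfl

lemma no2 {H : SimpleGraph (Option (Fin t × Fin 2) ⊕ Fin 2)}
    (hconn : H.Connected) (hrad : graphRadius H = 3)
    (hind : ∀ u v, H.Adj (inl u) (inl v) ↔ (K1JoinTP2 t).Adj u v) : False := by
  obtain ⟨w, hw⟩ := exists_far_s19 hrad (inl none)
  rcases w with x | f
  · have := hw.trans (d_c_old hind x); norm_num at this
  by_cases hfo : 3 ≤ H.edist (inl none) (inr (f+1))
  · -- both new vertices far from c : new vertices form a closed set, contradiction
    refine not_reachable_of_closed {z | ∃ j, z = inr j} (by simp) ⟨f, rfl⟩ ?_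
      (hconn (inl none) (inr f))
    rintro a ⟨j, rfl⟩ b hab
    rcases b with x | j'
    · rcases fin2_cover f (f+1) j (fin2_succ_ne f).symm with rfl | rfl
      · exact absurd hab (far_no_old hind hw x)
      · exact absurd hab (far_no_old hind hfo x)
    · exact ⟨j', rfl⟩
  · have hno : H.edist (inl none) (inr (f+1)) ≤ 2 := enat_le_two_of_not _ hfo
    have hfn : ∀ z, H.Adj (inr f) z → z = inr (f+1) := by
      rintro (x | j') hz
      · exact absurd hz (far_no_old hind hw x)
      · rcases fin2_cover f (f+1) j' (fin2_succ_ne f).symm with rfl | rfl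
        · exact absurd rfl hz.ne
        · rfl
    by_cases hadj : H.Adj (inr f) (inr (f+1))
    · have hco : ¬ H.Adj (inl none) (inr (f+1)) := by
        intro h
        have h1 : H.edist (inl none) (inr f) ≤ 1 + 1 :=
          edist_le_add_one h (edist_le_one_of_adj hadj.symm)
        have := hw.trans h1; norm_num at this
      obtain ⟨z, hz, hd⟩ := exists_adj_closer (by simp) (hfin hconn (inl none) (inr (f+1)))
      have hz1 : H.edist (inl none) z ≤ 1 := by
        have h2 : H.edist (inl none) z + 1 ≤ 1 + 1 := by
          refine hd.trans (hno.trans ?_); norm_num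
        exact enat_peel h2
      rcases z with x | j'
      · rcases x with - | p
        · exact hco hz
        · -- leaf p adjacent to (f+1): its eccentricity is ≤ 2
          apply not_all_le_two hrad (inl (some p))
          rintro (x' | j'')
          · exact d_old_old hind _ _
          · rcases fin2_cover f (f+1) j'' (fin2_succ_ne f).symm with rfl | rfl
            · have : H.edist (inl (some p)) (inr j'') ≤ 1 + 1 :=
                edist_le_add_one hz (edist_le_one_of_adj hadj.symm)
              exact this.trans (by norm_num)
            · exact (edist_le_one_of_adj hz).trans (by norm_num)
      · rcases fin2_cover f (f+1) j' (fin2_succ_ne f).symm with rfl | rfl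
        · have : (3:ℕ∞) ≤ 1 := hw.trans hz1; norm_num at this
        · exact hz.ne rfl
    · refine not_reachable_of_closed {z | z = inr f} (by simp) rfl ?_
        (hconn (inl none) (inr f))
      rintro a rfl b hab
      exact absurd ((hfn b hab) ▸ hab) hadj

end K012

section Helpers2
variable {V : Type*} {G : SimpleGraph V} {u v w : V}

lemma edist_le_of_le_le {m n : ℕ∞} (h1 : G.edist u v ≤ m) (h2 : G.edist v w ≤ n) :
    G.edist u w ≤ m + n :=
  SimpleGraph.edist_triangle.trans (add_le_add h1 h2)

lemma adj_of_edist_le_one (hne : u ≠ v) (h : G.edist u v ≤ 1) : G.Adj u v := by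
  by_contra hadj
  have := (two_le_edist hne hadj).trans h
  norm_num at this

lemma four_le_edist (hne : u ≠ v) (h : ∀ w, G.Adj u w → 3 ≤ G.edist w v) :
    4 ≤ G.edist u v := by
  have h4 : (3:ℕ∞) + 1 = 4 := by norm_num
  rw [← h4]
  exact le_edist_succ hne h

lemma three_le_of_two_lt {d : ℕ∞} (h : 2 < d) : 3 ≤ d := by
  have := Order.add_one_le_of_lt h
  have h3 : (2:ℕ∞) + 1 = 3 := by norm_num
  rw [h3] at this
  exact this

end Helpers2


section K3
variable {t : ℕ} {H : SimpleGraph (Option (Fin t × Fin 2) ⊕ Fin 3)}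

lemma case1 (hconn : H.Connected)
    (hind : ∀ u v, H.Adj (inl u) (inl v) ↔ (K1JoinTP2 t).Adj u v)
    (hfar : ∀ j : Fin 3, 3 ≤ H.edist (inl none) (inr j)) : False := by
  refine not_reachable_of_closed {z | ∃ j : Fin 3, z = inr j} (by simp) ⟨0, rfl⟩ ?_
    (hconn (inl none) (inr 0))
  rintro a ⟨j, rfl⟩ b hab
  rcases b with x | j'
  · exact absurd hab (far_no_old hind (hfar j) x)
  · exact ⟨j', rfl⟩

lemma case2core (ht : 3 ≤ t) (hconn : H.Connected) (hrad : graphRadius H = 3)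
    (hcard : {u : Option (Fin t × Fin 2) ⊕ Fin 3 | ecc H u ≠ graphRadius H}.ncard = 2)
    (hind : ∀ u v, H.Adj (inl u) (inl v) ↔ (K1JoinTP2 t).Adj u v)
    {p q n : Fin 3} (hpq : p ≠ q) (hnp : n ≠ p) (hnq : n ≠ q)
    (hcov : ∀ j : Fin 3, j = p ∨ j = q ∨ j = n)
    (hfp : 3 ≤ H.edist (inl none) (inr p)) (hfq : 3 ≤ H.edist (inl none) (inr q))
    (hadjnp : H.Adj (inr n) (inr p)) (hnadj : ¬ H.Adj (inr n) (inr q)) : False := by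
  -- q's unique neighbour is p
  have hqn : ∀ z, H.Adj (inr q) z → z = inr p := by
    rintro (x | j) hz
    · exact absurd hz (far_no_old hind hfq x)
    · rcases hcov j with rfl | rfl | rfl
      · rfl
      · exact absurd rfl hz.ne
      · exact absurd hz.symm hnadj
  have hpq_adj : H.Adj (inr p) (inr q) := by
    obtain ⟨z, hz, -⟩ := exists_adj_closer (by simp) (hfin hconn (inl none) (inr q))
    have := hqn z hz.symm
    rwa [this] at hz
  have hpend : ∀ w, w ≠ inr q → H.edist w (inr q) = H.edist w (inr p) + 1 :=
    fun w hw => edist_pendant hpq_adj hqn hw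
  have h4cq : 4 ≤ H.edist (inl none) (inr q) := by
    rw [hpend (inl none) (by simp)]
    have h4 : (3:ℕ∞) + 1 = 4 := by norm_num
    rw [← h4]
    exact add_le_add_left hfp 1
  have h4c : 4 ≤ ecc H (inl none) := h4cq.trans edist_le_ecc
  have h4q : 4 ≤ ecc H (inr q) := by
    refine le_trans ?_ (edist_le_ecc (v := inl none))
    rwa [SimpleGraph.edist_comm]
  have hcent : ∀ z : Option (Fin t × Fin 2) ⊕ Fin 3, z ≠ inl none → z ≠ inr q → ecc H z = 3 :=
    fun z hz1 hz2 => pair_central hrad hcard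
      (show (inl none : Option (Fin t × Fin 2) ⊕ Fin 3) ≠ inr q by simp) h4c h4q hz1 hz2
  -- every leaf is adjacent to n
  have hleafadj : ∀ (i : Fin t) (a : Fin 2), H.Adj (inl (some (i,a))) (inr n) := by
    intro i a
    have hecc : ecc H (inl (some (i,a))) = 3 := hcent (inl (some (i,a))) (by simp) (by simp)
    have hdq : H.edist (inl (some (i,a))) (inr q) ≤ 3 := by
      rw [← hecc]; exact edist_le_ecc
    rw [hpend _ (by simp)] at hdq
    have hdp2 : H.edist (inl (some (i,a))) (inr p) ≤ 2 := by
      refine enat_peel ?_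
      refine hdq.trans ?_
      norm_num
    have hdp2' : 2 ≤ H.edist (inl (some (i,a))) (inr p) := by
      refine two_le_edist (by simp) ?_
      intro h
      exact far_no_old hind hfp _ h.symm
    obtain ⟨z, hz, hd⟩ := exists_adj_closer (show (inl (some (i,a)) : Option (Fin t × Fin 2) ⊕ Fin 3) ≠ inr p by simp)
      (ne_top_of_le_ne_top (by norm_num) hdp2)
    have hz1 : H.edist (inl (some (i,a))) z ≤ 1 := enat_peel (hd.trans hdp2)
    rcases z with x | j
    · exact absurd hz.symm (far_no_old hind hfp x)
    · rcases hcov j with rfl | rfl | rfl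
      · exact absurd rfl hz.ne
      · exfalso
        have h3 : H.edist (inl (some (i,a))) (inr j) = H.edist (inl (some (i,a))) (inr p) + 1 :=
          hpend _ (by simp)
        have : (3:ℕ∞) ≤ 1 := by
          refine le_trans ?_ hz1
          rw [h3]
          have : (2:ℕ∞) + 1 = 3 := by norm_num
          rw [← this]
          exact add_le_add_left hdp2' 1
        norm_num at this
      · exact adj_of_edist_le_one (by simp) hz1
  -- but then ecc of n is at most 2
  apply not_all_le_two hrad (inr n)
  rintro (x | j)
  · rcases x with - | y
    · have h1 : H.Adj (inr n) (inl (some (⟨0, by omega⟩, 0))) := (hleafadj _ _).symm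
      have := edist_le_add_one h1 (d_old_c hind _)
      exact this.trans (by norm_num)
    · exact (edist_le_one_of_adj (hleafadj y.1 y.2).symm).trans (by norm_num)
  · rcases hcov j with rfl | rfl | rfl
    · exact (edist_le_one_of_adj hadjnp).trans (by norm_num)
    · have := edist_le_add_one hadjnp (edist_le_one_of_adj hpq_adj)
      exact this.trans (by norm_num)
    · rw [SimpleGraph.edist_self]; norm_num

lemma case2 (ht : 3 ≤ t) (hconn : H.Connected) (hrad : graphRadius H = 3)
    (hcard : {u : Option (Fin t × Fin 2) ⊕ Fin 3 | ecc H u ≠ graphRadius H}.ncard = 2)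
    (hind : ∀ u v, H.Adj (inl u) (inl v) ↔ (K1JoinTP2 t).Adj u v)
    {p q n : Fin 3} (hpq : p ≠ q) (hnp : n ≠ p) (hnq : n ≠ q)
    (hcov : ∀ j : Fin 3, j = p ∨ j = q ∨ j = n)
    (hfp : 3 ≤ H.edist (inl none) (inr p)) (hfq : 3 ≤ H.edist (inl none) (inr q))
    (hnn : H.edist (inl none) (inr n) ≤ 2) : False := by
  by_cases hp : H.Adj (inr n) (inr p) <;> by_cases hq : H.Adj (inr n) (inr q)
  · -- n adjacent to both far vertices
    have hco : ¬ H.Adj (inl none) (inr n) := by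
      intro h
      have h1 := edist_le_add_one h (edist_le_one_of_adj hp)
      have := hfp.trans h1
      norm_num at this
    obtain ⟨z, hz, hd⟩ := exists_adj_closer (show (inl none : Option (Fin t × Fin 2) ⊕ Fin 3) ≠ inr n by simp)
      (hfin hconn _ _)
    have hz1 : H.edist (inl none) z ≤ 1 := enat_peel (hd.trans (hnn.trans (by norm_num)))
    rcases z with x | j
    · rcases x with - | y
      · exact hco hz
      · -- leaf y adjacent to n, its eccentricity ≤ 2
        apply not_all_le_two hrad (inl (some y))
        rintro (x' | j')
        · exact d_old_old hind _ _
        · rcases hcov j' with rfl | rfl | rfl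
          · exact (edist_le_add_one hz (edist_le_one_of_adj hp)).trans (by norm_num)
          · exact (edist_le_add_one hz (edist_le_one_of_adj hq)).trans (by norm_num)
          · exact (edist_le_one_of_adj hz).trans (by norm_num)
    · rcases hcov j with rfl | rfl | rfl
      · have := hfp.trans hz1; norm_num at this
      · have := hfq.trans hz1; norm_num at this
      · exact absurd rfl hz.ne
  · exact case2core ht hconn hrad hcard hind hpq hnp hnq hcov hfp hfq hp hq
  · exact case2core ht hconn hrad hcard hind hpq.symm hnq hnp
      (fun j => by rcases hcov j with h | h | h <;> tauto) hfq hfp hq hp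
  · -- n adjacent to neither : {p, q} is closed
    refine not_reachable_of_closed {z | z = inr p ∨ z = inr q} (by simp) (Or.inl rfl) ?_
      (hconn (inl none) (inr p))
    rintro a (rfl | rfl) b hab
    · rcases b with x | j
      · exact absurd hab (far_no_old hind hfp x)
      · rcases hcov j with rfl | rfl | rfl
        · exact Or.inl rfl
        · exact Or.inr rfl
        · exact absurd hab.symm hp
    · rcases b with x | j
      · exact absurd hab (far_no_old hind hfq x)
      · rcases hcov j with rfl | rfl | rfl
        · exact Or.inl rfl
        · exact Or.inr rfl
        · exact absurd hab.symm hq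

end K3


section K3b
variable {t : ℕ} {H : SimpleGraph (Option (Fin t × Fin 2) ⊕ Fin 3)}

lemma case3a_core (hconn : H.Connected) (hrad : graphRadius H = 3)
    (hcard : {u : Option (Fin t × Fin 2) ⊕ Fin 3 | ecc H u ≠ graphRadius H}.ncard = 2)
    (hind : ∀ u v, H.Adj (inl u) (inl v) ↔ (K1JoinTP2 t).Adj u v)
    {f u v : Fin 3} (hfu : f ≠ u) (hfv : f ≠ v) (huv : u ≠ v)
    (hcov : ∀ j : Fin 3, j = f ∨ j = u ∨ j = v)
    (hff : 3 ≤ H.edist (inl none) (inr f))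
    (hnu : H.edist (inl none) (inr u) ≤ 2) (hnv : H.edist (inl none) (inr v) ≤ 2)
    (hadjfu : H.Adj (inr f) (inr u)) (hnofv : ¬ H.Adj (inr f) (inr v)) : False := by
  -- f's unique neighbour is u
  have huniq : ∀ z, H.Adj (inr f) z → z = inr u := by
    rintro (x | j) hz
    · exact absurd hz (far_no_old hind hff x)
    · rcases hcov j with rfl | rfl | rfl
      · exact absurd rfl hz.ne
      · rfl
      · exact absurd hz hnofv
  have hpend : ∀ w, w ≠ inr f → H.edist w (inr f) = H.edist w (inr u) + 1 :=
    fun w hw => edist_pendant hadjfu.symm huniq hw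
  have hncu : ¬ H.Adj (inl none) (inr u) := by
    intro h
    have h1 := edist_le_add_one h (edist_le_one_of_adj hadjfu.symm)
    have := hff.trans h1
    norm_num at this
  -- key: a leaf adjacent to u is at distance ≥ 3 from v
  have hkey : ∀ (i : Fin t) (a : Fin 2), H.Adj (inl (some (i,a))) (inr u) →
      3 ≤ H.edist (inl (some (i,a))) (inr v) := by
    intro i a hadj
    by_contra h'
    apply not_all_le_two hrad (inl (some (i,a)))
    rintro (x | j)
    · exact d_old_old hind _ _
    · rcases hcov j with rfl | rfl | rfl
      · have h2 : H.edist (inl (some (i,a))) (inr j) = H.edist (inl (some (i,a))) (inr u) + 1 :=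
          hpend _ (by simp)
        rw [h2]
        exact le_trans (add_le_add_left (edist_le_one_of_adj hadj) 1) (by norm_num)
      · exact (edist_le_one_of_adj hadj).trans (by norm_num)
      · exact enat_le_two_of_not _ h'
  by_cases hv1 : 2 ≤ H.edist (inl none) (inr v)
  · -- v also at distance 2 from c
    have hncv : ¬ H.Adj (inl none) (inr v) := by
      intro h
      have := hv1.trans (edist_le_one_of_adj h)
      norm_num at this
    -- u has a leaf neighbour
    obtain ⟨z, hz, hd⟩ := exists_adj_closer (show (inl none : Option (Fin t × Fin 2) ⊕ Fin 3) ≠ inr u by simp)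
      (hfin hconn _ _)
    have hz1 : H.edist (inl none) z ≤ 1 := enat_peel (hd.trans (hnu.trans (by norm_num)))
    rcases z with x | j
    swap
    · exfalso
      rcases hcov j with rfl | rfl | rfl
      · have := hff.trans hz1; norm_num at this
      · exact hz.ne rfl
      · have := hv1.trans hz1; norm_num at this
    rcases x with - | y
    · exact hncu hz
    -- y is a leaf adjacent to u
    obtain ⟨iy, ay⟩ := y
    have h3yv : 3 ≤ H.edist (inl (some (iy,ay))) (inr v) := hkey iy ay hz
    have hnuv : ¬ H.Adj (inr u) (inr v) := by
      intro h
      have h1 := edist_le_add_one hz (edist_le_one_of_adj h)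
      have := h3yv.trans h1
      norm_num at this
    have h3uv : 3 ≤ H.edist (inr u) (inr v) := by
      refine three_le_edist (by simp [huv]) hnuv ?_
      rintro (x | j) h1 h2
      · rcases x with - | z
        · exact hncu h1.symm
        · obtain ⟨iz, az⟩ := z
          have h3 := hkey iz az h1.symm
          have h0 := h3.trans (edist_le_one_of_adj h2)
          norm_num at h0
      · rcases hcov j with rfl | rfl | rfl
        · exact hnofv h2
        · exact h1.ne rfl
        · exact h2.ne rfl
    have h4vf : 4 ≤ H.edist (inr v) (inr f) := by
      rw [hpend _ (by simp [hfv.symm, Sum.inr.injEq])]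
      have h4 : (3:ℕ∞) + 1 = 4 := by norm_num
      rw [← h4]
      refine add_le_add_left ?_ 1
      rw [SimpleGraph.edist_comm]
      exact h3uv
    have h4v : 4 ≤ ecc H (inr v) := h4vf.trans edist_le_ecc
    have h4f : 4 ≤ ecc H (inr f) := by
      refine le_trans ?_ (edist_le_ecc (v := inr v))
      rwa [SimpleGraph.edist_comm]
    have heu : ecc H (inr u) = 3 :=
      pair_central hrad hcard (show (inr v : Option (Fin t × Fin 2) ⊕ Fin 3) ≠ inr f by simp [hfv.symm])
        h4v h4f (by simp [huv]) (by simp [hfu.symm])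
    have h4uv : 4 ≤ H.edist (inr u) (inr v) := by
      refine four_le_edist (by simp [huv]) ?_
      rintro (x | j) hw
      · rcases x with - | z
        · exact absurd hw.symm hncu
        · obtain ⟨iz, az⟩ := z
          exact hkey iz az hw.symm
      · rcases hcov j with rfl | rfl | rfl
        · rw [SimpleGraph.edist_comm] at h4vf
          exact le_trans (by norm_num) h4vf
        · exact absurd rfl hw.ne
        · exact absurd hw hnuv
    have := h4uv.trans (edist_le_ecc.trans heu.le)
    norm_num at this
  · -- v at distance ≤ 1 from c : no leaf is adjacent to u
    have hv2 : H.edist (inl none) (inr v) ≤ 1 := enat_le_one_of_not _ hv1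
    have hnoleaf : ∀ (i : Fin t) (a : Fin 2), ¬ H.Adj (inl (some (i,a))) (inr u) := by
      intro i a h
      have h3 := hkey i a h
      have hle : H.edist (inl (some (i,a))) (inr v) ≤ 1 + 1 := by
        refine edist_le_of_le_le (v := inl none) ?_ hv2
        exact d_old_c hind _
      have := h3.trans hle
      norm_num at this
    obtain ⟨z, hz, hd⟩ := exists_adj_closer (show (inl none : Option (Fin t × Fin 2) ⊕ Fin 3) ≠ inr u by simp)
      (hfin hconn _ _)
    have hz1 : H.edist (inl none) z ≤ 1 := enat_peel (hd.trans (hnu.trans (by norm_num)))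
    rcases z with x | j
    · rcases x with - | y
      · exact hncu hz
      · exact hnoleaf y.1 y.2 hz
    · rcases hcov j with rfl | rfl | rfl
      · have := hff.trans hz1; norm_num at this
      · exact hz.ne rfl
      · -- v adjacent to u and close to c : ecc v ≤ 2
        apply not_all_le_two hrad (inr j)
        rintro (x | j')
        · refine le_trans (edist_le_of_le_le (m := 1) (n := 1) (v := inl none) ?_ (d_c_old hind x)) (by norm_num)
          rw [SimpleGraph.edist_comm]
          exact hv2
        · rcases hcov j' with rfl | rfl | rfl
          · exact (edist_le_add_one hz (edist_le_one_of_adj hadjfu.symm)).trans (by norm_num)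
          · exact (edist_le_one_of_adj hz).trans (by norm_num)
          · rw [SimpleGraph.edist_self]; norm_num

end K3b


section K3c
variable {t : ℕ} {H : SimpleGraph (Option (Fin t × Fin 2) ⊕ Fin 3)}

lemma fin2_add_one_add_one : ∀ b : Fin 2, b + 1 + 1 = b := by decide

lemma helper3c_a (hind : ∀ u v, H.Adj (inl u) (inl v) ↔ (K1JoinTP2 t).Adj u v)
    {f u v : Fin 3} (hcov : ∀ j : Fin 3, j = f ∨ j = u ∨ j = v)
    (hncu : ¬ H.Adj (inl none) (inr u)) (hnuv : ¬ H.Adj (inr u) (inr v))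
    (hfold : ∀ x, ¬ H.Adj (inr f) (inl x))
    {i : Fin t} {a : Fin 2}
    (h1 : ¬ H.Adj (inl (some (i,a))) (inr u))
    (h2 : ¬ H.Adj (inl (some (i,a+1))) (inr u)) :
    3 ≤ H.edist (inl (some (i,a))) (inr u) := by
  refine three_le_edist (by simp) h1 ?_
  rintro (z | j) hw hw2
  · rcases leaf_old_nbrs hind hw with rfl | rfl
    · exact hncu hw2
    · exact h2 hw2
  · rcases hcov j with rfl | rfl | rfl
    · exact hfold _ hw.symm
    · exact hw2.ne rfl
    · exact hnuv hw2.symm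

lemma case3c (hconn : H.Connected) (hrad : graphRadius H = 3)
    (hcard : {u : Option (Fin t × Fin 2) ⊕ Fin 3 | ecc H u ≠ graphRadius H}.ncard = 2)
    (hind : ∀ u v, H.Adj (inl u) (inl v) ↔ (K1JoinTP2 t).Adj u v)
    {f u v : Fin 3} (hfu : f ≠ u) (hfv : f ≠ v) (huv : u ≠ v)
    (hcov : ∀ j : Fin 3, j = f ∨ j = u ∨ j = v)
    (hff : 3 ≤ H.edist (inl none) (inr f))
    (hnu : H.edist (inl none) (inr u) ≤ 2) (hnv : H.edist (inl none) (inr v) ≤ 2)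
    (hadjfu : H.Adj (inr f) (inr u)) (hadjfv : H.Adj (inr f) (inr v)) : False := by
  have hfold : ∀ x, ¬ H.Adj (inr f) (inl x) := far_no_old hind hff
  have hncu : ¬ H.Adj (inl none) (inr u) := by
    intro h
    have h1 := edist_le_add_one h (edist_le_one_of_adj hadjfu.symm)
    have := hff.trans h1; norm_num at this
  have hncv : ¬ H.Adj (inl none) (inr v) := by
    intro h
    have h1 := edist_le_add_one h (edist_le_one_of_adj hadjfv.symm)
    have := hff.trans h1; norm_num at this
  by_cases hA : H.Adj (inr u) (inr v)
  · -- u and v adjacent : take a neighbour of u close to c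
    obtain ⟨z, hz, hd⟩ := exists_adj_closer (show (inl none : Option (Fin t × Fin 2) ⊕ Fin 3) ≠ inr u by simp)
      (hfin hconn _ _)
    have hz1 : H.edist (inl none) z ≤ 1 := enat_peel (hd.trans (hnu.trans (by norm_num)))
    rcases z with x | j
    · rcases x with - | y
      · exact hncu hz
      · obtain ⟨iy, ay⟩ := y
        apply not_all_le_two hrad (inl (some (iy, ay)))
        rintro (x' | j')
        · exact d_old_old hind _ _
        · rcases hcov j' with rfl | rfl | rfl
          · exact (edist_le_add_one hz (edist_le_one_of_adj hadjfu.symm)).trans (by norm_num)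
          · exact (edist_le_one_of_adj hz).trans (by norm_num)
          · exact (edist_le_add_one hz (edist_le_one_of_adj hA)).trans (by norm_num)
    · rcases hcov j with rfl | rfl | rfl
      · have := hff.trans hz1; norm_num at this
      · exact hz.ne rfl
      · have h2 : H.edist (inl none) (inr f) ≤ 1 + 1 :=
          edist_le_of_le_le hz1 (edist_le_one_of_adj hadjfv.symm)
        have := hff.trans h2; norm_num at this
  · -- u and v not adjacent
    have key_u : ∀ (i : Fin t) (a : Fin 2), ¬ H.Adj (inl (some (i,a))) (inr u) →
        ¬ H.Adj (inl (some (i,a+1))) (inr u) → 3 ≤ H.edist (inl (some (i,a))) (inr u) :=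
      fun i a h1 h2 => helper3c_a hind hcov hncu hA hfold h1 h2
    have key_v : ∀ (i : Fin t) (a : Fin 2), ¬ H.Adj (inl (some (i,a))) (inr v) →
        ¬ H.Adj (inl (some (i,a+1))) (inr v) → 3 ≤ H.edist (inl (some (i,a))) (inr v) :=
      fun i a h1 h2 => helper3c_a hind
        (fun j => by rcases hcov j with h | h | h <;> tauto)
        hncv (fun h => hA h.symm) hfold h1 h2
    -- every leaf is within distance 2 of u or of v
    have hE : ∀ (i : Fin t) (a : Fin 2),
        H.edist (inl (some (i,a))) (inr u) ≤ 2 ∨ H.edist (inl (some (i,a))) (inr v) ≤ 2 := by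
      intro i a
      by_contra hcon
      push_neg at hcon
      obtain ⟨hu2, hv2⟩ := hcon
      have hu3 : 3 ≤ H.edist (inl (some (i,a))) (inr u) := three_le_of_two_lt hu2
      have hv3 : 3 ≤ H.edist (inl (some (i,a))) (inr v) := three_le_of_two_lt hv2
      have hxu : ¬ H.Adj (inl (some (i,a))) (inr u) := by
        intro hh
        have := hu3.trans (edist_le_one_of_adj hh); norm_num at this
      have hpu : ¬ H.Adj (inl (some (i,a+1))) (inr u) := by
        intro hh
        have h1 : H.edist (inl (some (i,a))) (inr u) ≤ 1 + 1 :=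
          edist_le_add_one (partner_adj hind i a) (edist_le_one_of_adj hh)
        have := hu3.trans h1; norm_num at this
      have hxv : ¬ H.Adj (inl (some (i,a))) (inr v) := by
        intro hh
        have := hv3.trans (edist_le_one_of_adj hh); norm_num at this
      have hpv : ¬ H.Adj (inl (some (i,a+1))) (inr v) := by
        intro hh
        have h1 : H.edist (inl (some (i,a))) (inr v) ≤ 1 + 1 :=
          edist_le_add_one (partner_adj hind i a) (edist_le_one_of_adj hh)
        have := hv3.trans h1; norm_num at this
      have hpu3 : 3 ≤ H.edist (inl (some (i,a+1))) (inr u) :=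
        key_u i (a+1) hpu (by rw [fin2_add_one_add_one]; exact hxu)
      have hpv3 : 3 ≤ H.edist (inl (some (i,a+1))) (inr v) :=
        key_v i (a+1) hpv (by rw [fin2_add_one_add_one]; exact hxv)
      have h4fx : 4 ≤ H.edist (inr f) (inl (some (i,a))) := by
        refine four_le_edist (by simp) ?_
        rintro (x | j) hw
        · exact absurd hw (hfold x)
        · rcases hcov j with rfl | rfl | rfl
          · exact absurd rfl hw.ne
          · rw [SimpleGraph.edist_comm]; exact hu3
          · rw [SimpleGraph.edist_comm]; exact hv3
      have h4fp : 4 ≤ H.edist (inr f) (inl (some (i,a+1))) := by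
        refine four_le_edist (by simp) ?_
        rintro (x | j) hw
        · exact absurd hw (hfold x)
        · rcases hcov j with rfl | rfl | rfl
          · exact absurd rfl hw.ne
          · rw [SimpleGraph.edist_comm]; exact hpu3
          · rw [SimpleGraph.edist_comm]; exact hpv3
      have e1 : 4 ≤ ecc H (inl (some (i,a))) := by
        refine le_trans ?_ (edist_le_ecc (v := inr f))
        rwa [SimpleGraph.edist_comm]
      have e2 : 4 ≤ ecc H (inl (some (i,a+1))) := by
        refine le_trans ?_ (edist_le_ecc (v := inr f))
        rwa [SimpleGraph.edist_comm]
      have e3 : 4 ≤ ecc H (inr f) := h4fx.trans edist_le_ecc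
      exact three_noncentral hrad hcard
        (show (inl (some (i,a)) : Option (Fin t × Fin 2) ⊕ Fin 3) ≠ inl (some (i,a+1)) by
          simp [(fin2_succ_ne a).symm])
        (by simp) (by simp) e1 e2 e3
    -- now every vertex has eccentricity ≤ 3, contradiction with exactly two non-central
    have dcf : H.edist (inl none) (inr f) ≤ 3 := by
      refine le_trans (edist_le_of_le_le hnu (edist_le_one_of_adj hadjfu.symm)) (by norm_num)
    have dlu : ∀ (i : Fin t) (a : Fin 2), H.edist (inl (some (i,a))) (inr u) ≤ 3 := by
      intro i a
      refine le_trans (edist_le_of_le_le (d_old_c hind _) hnu) (by norm_num)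
    have dlv : ∀ (i : Fin t) (a : Fin 2), H.edist (inl (some (i,a))) (inr v) ≤ 3 := by
      intro i a
      refine le_trans (edist_le_of_le_le (d_old_c hind _) hnv) (by norm_num)
    have dlf : ∀ (i : Fin t) (a : Fin 2), H.edist (inl (some (i,a))) (inr f) ≤ 3 := by
      intro i a
      rcases hE i a with h | h
      · exact le_trans (edist_le_of_le_le h (edist_le_one_of_adj hadjfu.symm)) (by norm_num)
      · exact le_trans (edist_le_of_le_le h (edist_le_one_of_adj hadjfv.symm)) (by norm_num)
    apply no_noncentral hrad hcard
    intro z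
    rw [ecc_le_iff]
    rcases z with x | j
    · rcases x with - | y
      · rintro (x' | j')
        · exact (d_c_old hind _).trans (by norm_num)
        · rcases hcov j' with rfl | rfl | rfl
          · exact dcf
          · exact hnu.trans (by norm_num)
          · exact hnv.trans (by norm_num)
      · obtain ⟨iy, ay⟩ := y
        rintro (x' | j')
        · exact (d_old_old hind _ _).trans (by norm_num)
        · rcases hcov j' with rfl | rfl | rfl
          · exact dlf iy ay
          · exact dlu iy ay
          · exact dlv iy ay
    · rcases hcov j with rfl | rfl | rfl
      · rintro (x' | j')
        · rcases x' with - | y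
          · rw [SimpleGraph.edist_comm]; exact dcf
          · rw [SimpleGraph.edist_comm]; exact dlf y.1 y.2
        · rcases hcov j' with rfl | rfl | rfl
          · rw [SimpleGraph.edist_self]; norm_num
          · exact (edist_le_one_of_adj hadjfu).trans (by norm_num)
          · exact (edist_le_one_of_adj hadjfv).trans (by norm_num)
      · rintro (x' | j')
        · rcases x' with - | y
          · rw [SimpleGraph.edist_comm]; exact hnu.trans (by norm_num)
          · rw [SimpleGraph.edist_comm]; exact dlu y.1 y.2
        · rcases hcov j' with rfl | rfl | rfl
          · exact (edist_le_one_of_adj hadjfu.symm).trans (by norm_num)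
          · rw [SimpleGraph.edist_self]; norm_num
          · refine le_trans (edist_le_add_one hadjfu.symm (edist_le_one_of_adj hadjfv)) (by norm_num)
      · rintro (x' | j')
        · rcases x' with - | y
          · rw [SimpleGraph.edist_comm]; exact hnv.trans (by norm_num)
          · rw [SimpleGraph.edist_comm]; exact dlv y.1 y.2
        · rcases hcov j' with rfl | rfl | rfl
          · exact (edist_le_one_of_adj hadjfv.symm).trans (by norm_num)
          · refine le_trans (edist_le_add_one hadjfv.symm (edist_le_one_of_adj hadjfu)) (by norm_num)
          · rw [SimpleGraph.edist_self]; norm_num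

end K3c


section K3main
variable {t : ℕ} {H : SimpleGraph (Option (Fin t × Fin 2) ⊕ Fin 3)}

lemma no3 (ht : 3 ≤ t) (hconn : H.Connected) (hrad : graphRadius H = 3)
    (hcard : {u : Option (Fin t × Fin 2) ⊕ Fin 3 | ecc H u ≠ graphRadius H}.ncard = 2)
    (hind : ∀ u v, H.Adj (inl u) (inl v) ↔ (K1JoinTP2 t).Adj u v) : False := by
  obtain ⟨w, hw⟩ := exists_far_s19 hrad (inl none)
  rcases w with x | f
  · have := hw.trans (d_c_old hind x); norm_num at this
  obtain ⟨a, b, hab, haf, hbf, hcov⟩ :=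
    (show ∀ f : Fin 3, ∃ a b : Fin 3, a ≠ b ∧ a ≠ f ∧ b ≠ f ∧ ∀ j, j = f ∨ j = a ∨ j = b by
      decide) f
  by_cases hfa : 3 ≤ H.edist (inl none) (inr a) <;>
    by_cases hfb : 3 ≤ H.edist (inl none) (inr b)
  · exact case1 hconn hind (fun j => by rcases hcov j with rfl | rfl | rfl <;> assumption)
  · exact case2 ht hconn hrad hcard hind haf.symm hbf hab.symm hcov hw hfa
      (enat_le_two_of_not _ hfb)
  · exact case2 ht hconn hrad hcard hind hbf.symm haf hab
      (fun j => by rcases hcov j with h | h | h <;> tauto) hw hfb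
      (enat_le_two_of_not _ hfa)
  · have hna := enat_le_two_of_not _ hfa
    have hnb := enat_le_two_of_not _ hfb
    obtain ⟨z, hz, -⟩ := exists_adj_closer (show (inl none : Option (Fin t × Fin 2) ⊕ Fin 3) ≠ inr f by simp)
      (hfin hconn _ _)
    rcases z with x | j
    · exact absurd hz.symm (far_no_old hind hw x)
    · rcases hcov j with rfl | rfl | rfl
      · exact hz.ne rfl
      · by_cases hvb : H.Adj (inr f) (inr b)
        · exact case3c hconn hrad hcard hind haf.symm hbf.symm hab hcov hw hna hnb hz.symm hvb
        · exact case3a_core hconn hrad hcard hind haf.symm hbf.symm hab hcov hw hna hnb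
            hz.symm hvb
      · by_cases hva : H.Adj (inr f) (inr a)
        · exact case3c hconn hrad hcard hind hbf.symm haf.symm hab.symm
            (fun j => by rcases hcov j with h | h | h <;> tauto) hw hnb hna hz.symm hva
        · exact case3a_core hconn hrad hcard hind hbf.symm haf.symm hab.symm
            (fun j => by rcases hcov j with h | h | h <;> tauto) hw hnb hna hz.symm hva

end K3main


/-- The 3-ASC graph containing `K1JoinTP2 t`: add 4 vertices `w0 w1 w2 w3`;
`w0` is adjacent to the two leaves of pair `0`, `w1` to all other leaves,
`w2` to `w0`, `w1`, `w3`. -/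
def H4 (t : ℕ) : SimpleGraph (Option (Fin t × Fin 2) ⊕ Fin 4) :=
  SimpleGraph.fromRel (fun x y =>
    (∃ u v, x = inl u ∧ y = inl v ∧
      (u = none ∨ ∃ i a b, u = some (i, a) ∧ v = some (i, b))) ∨
    (∃ (i : Fin t) (a : Fin 2) (j : Fin 4), x = inl (some (i,a)) ∧ y = inr j ∧
      ((j = 0 ∧ i.val = 0) ∨ (j = 1 ∧ i.val ≠ 0))) ∨
    (∃ j : Fin 4, x = inr 2 ∧ y = inr j))

section H4adj
variable {t : ℕ}

lemma H4_adj_inl_inl {u v : Option (Fin t × Fin 2)} :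
    (H4 t).Adj (inl u) (inl v) ↔ (K1JoinTP2 t).Adj u v := by
  simp only [H4, K1JoinTP2, fromRel_adj, ne_eq, inl.injEq]
  constructor
  · rintro ⟨hne, h⟩
    refine ⟨hne, ?_⟩
    rcases h with (⟨u',v',h1,h2,h3⟩|⟨i,a,j,h1,h2,h3⟩|⟨j,h1,h2⟩)|(⟨u',v',h1,h2,h3⟩|⟨i,a,j,h1,h2,h3⟩|⟨j,h1,h2⟩)
    · cases h1; cases h2; exact Or.inl h3
    · exact absurd h2 (by simp)
    · exact absurd h2 (by simp)
    · cases h1; cases h2; exact Or.inr h3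
    · exact absurd h2 (by simp)
    · exact absurd h2 (by simp)
  · rintro ⟨hne, h | h⟩
    · exact ⟨hne, Or.inl (Or.inl ⟨u, v, rfl, rfl, h⟩)⟩
    · exact ⟨hne, Or.inr (Or.inl ⟨v, u, rfl, rfl, h⟩)⟩

lemma H4_not_adj_c_inr (j : Fin 4) : ¬ (H4 t).Adj (inl none) (inr j) := by
  simp only [H4, fromRel_adj, ne_eq]
  rintro ⟨-, (⟨u',v',h1,h2,-⟩|⟨i,a,j',h1,-,-⟩|⟨j',h1,-⟩)|(⟨u',v',h1,h2,-⟩|⟨i,a,j',-,h2,-⟩|⟨j',-,h2⟩)⟩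
  · exact absurd h2 (by simp)
  · exact absurd h1 (by simp)
  · exact absurd h1 (by simp)
  · exact absurd h1 (by simp)
  · exact absurd h2 (by simp)
  · exact absurd h2 (by simp)

lemma H4_adj_leaf_inr {i : Fin t} {a : Fin 2} {j : Fin 4} :
    (H4 t).Adj (inl (some (i,a))) (inr j) ↔ ((j = 0 ∧ i.val = 0) ∨ (j = 1 ∧ i.val ≠ 0)) := by
  simp only [H4, fromRel_adj, ne_eq]
  constructor
  · rintro ⟨-, (⟨u',v',-,h2,-⟩|⟨i',a',j',h1,h2,h3⟩|⟨j',h1,-⟩)|(⟨u',v',h1,-,-⟩|⟨i',a',j',-,h2,-⟩|⟨j',-,h2⟩)⟩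
    · exact absurd h2 (by simp)
    · simp only [inl.injEq, Option.some.injEq, Prod.mk.injEq, inr.injEq] at h1 h2
      obtain ⟨rfl, rfl⟩ := h1
      obtain rfl := h2
      exact h3
    · exact absurd h1 (by simp)
    · exact absurd h1 (by simp)
    · exact absurd h2 (by simp)
    · exact absurd h2 (by simp)
  · intro h
    exact ⟨by simp, Or.inl (Or.inr (Or.inl ⟨i, a, j, rfl, rfl, h⟩))⟩

lemma H4_adj_inr_inr {j j' : Fin 4} :
    (H4 t).Adj (inr j) (inr j') ↔ (j ≠ j' ∧ (j = 2 ∨ j' = 2)) := by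
  simp only [H4, fromRel_adj, ne_eq, inr.injEq]
  constructor
  · rintro ⟨hne, (⟨u',v',h1,-,-⟩|⟨i,a,j'',h1,-,-⟩|⟨j'',h1,h2⟩)|(⟨u',v',h1,-,-⟩|⟨i,a,j'',h1,-,-⟩|⟨j'',h1,h2⟩)⟩
    · exact absurd h1 (by simp)
    · exact absurd h1 (by simp)
    · exact ⟨hne, Or.inl h1⟩
    · exact absurd h1 (by simp)
    · exact absurd h1 (by simp)
    · exact ⟨hne, Or.inr h1⟩
  · rintro ⟨hne, rfl | rfl⟩
    · exact ⟨hne, Or.inl (Or.inr (Or.inr ⟨j', rfl, rfl⟩))⟩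
    · exact ⟨hne, Or.inr (Or.inr (Or.inr ⟨j, rfl, rfl⟩))⟩

end H4adj


section H4dist
variable {t : ℕ}

lemma fin4_cases : ∀ j : Fin 4, j = 0 ∨ j = 1 ∨ j = 2 ∨ j = 3 := by decide

lemma adj_c_leaf (p : Fin t × Fin 2) : (H4 t).Adj (inl none) (inl (some p)) :=
  H4_adj_inl_inl.mpr (adjG_none p)

lemma hind4 : ∀ u v, (H4 t).Adj (inl u) (inl v) ↔ (K1JoinTP2 t).Adj u v :=
  fun _ _ => H4_adj_inl_inl

lemma adj_leaf_n0 {i : Fin t} (hi : i.val = 0) (a : Fin 2) :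
    (H4 t).Adj (inl (some (i,a))) (inr 0) :=
  H4_adj_leaf_inr.mpr (Or.inl ⟨rfl, hi⟩)

lemma adj_leaf_n1 {i : Fin t} (hi : i.val ≠ 0) (a : Fin 2) :
    (H4 t).Adj (inl (some (i,a))) (inr 1) :=
  H4_adj_leaf_inr.mpr (Or.inr ⟨rfl, hi⟩)

lemma adj_n0_n2 : (H4 t).Adj (inr 0) (inr 2) :=
  H4_adj_inr_inr.mpr ⟨by decide, Or.inr rfl⟩

lemma adj_n1_n2 : (H4 t).Adj (inr 1) (inr 2) :=
  H4_adj_inr_inr.mpr ⟨by decide, Or.inr rfl⟩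

lemma adj_n2_n3 : (H4 t).Adj (inr 2) (inr 3) :=
  H4_adj_inr_inr.mpr ⟨by decide, Or.inl rfl⟩

lemma uniq3 : ∀ z, (H4 t).Adj (inr 3) z → z = inr 2 := by
  rintro (x | j) h
  · rcases x with - | ⟨i, a⟩
    · exact absurd h.symm (H4_not_adj_c_inr 3)
    · rcases H4_adj_leaf_inr.mp h.symm with ⟨h1, -⟩ | ⟨h1, -⟩
      · exact absurd h1 (by decide)
      · exact absurd h1 (by decide)
  · rcases H4_adj_inr_inr.mp h with ⟨-, h2 | h2⟩
    · exact absurd h2 (by decide)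
    · rw [h2]

lemma no_leaf_n2 {i : Fin t} {a : Fin 2} : ¬ (H4 t).Adj (inl (some (i,a))) (inr 2) := by
  intro h
  rcases H4_adj_leaf_inr.mp h with ⟨h1, -⟩ | ⟨h1, -⟩
  · exact absurd h1 (by decide)
  · exact absurd h1 (by decide)

lemma no_leaf_n3 {i : Fin t} {a : Fin 2} : ¬ (H4 t).Adj (inl (some (i,a))) (inr 3) := by
  intro h
  rcases H4_adj_leaf_inr.mp h with ⟨h1, -⟩ | ⟨h1, -⟩
  · exact absurd h1 (by decide)
  · exact absurd h1 (by decide)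

-- upper bounds
lemma d_c_n0_le (ht : 3 ≤ t) : (H4 t).edist (inl none) (inr 0) ≤ 2 := by
  have h := edist_le_add_one (adj_c_leaf ((⟨0, by omega⟩ : Fin t), (0 : Fin 2)))
    (edist_le_one_of_adj (adj_leaf_n0 rfl 0))
  exact h.trans (by norm_num)

lemma d_c_n1_le (ht : 3 ≤ t) : (H4 t).edist (inl none) (inr 1) ≤ 2 := by
  have h := edist_le_add_one (adj_c_leaf ((⟨1, by omega⟩ : Fin t), (0 : Fin 2)))
    (edist_le_one_of_adj (adj_leaf_n1 (by simp) 0))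
  exact h.trans (by norm_num)

lemma d_c_n2_le (ht : 3 ≤ t) : (H4 t).edist (inl none) (inr 2) ≤ 3 := by
  have h := edist_le_of_le_le (d_c_n0_le ht) (edist_le_one_of_adj adj_n0_n2)
  exact h.trans (by norm_num)

lemma d_c_n3_le (ht : 3 ≤ t) : (H4 t).edist (inl none) (inr 3) ≤ 4 := by
  have h := edist_le_of_le_le (d_c_n2_le ht) (edist_le_one_of_adj adj_n2_n3)
  exact h.trans (by norm_num)

lemma d_leaf_n0_le (i : Fin t) (a : Fin 2) :
    (H4 t).edist (inl (some (i,a))) (inr 0) ≤ 3 := by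
  by_cases hi : i.val = 0
  · exact (edist_le_one_of_adj (adj_leaf_n0 hi a)).trans (by norm_num)
  · have h1 := edist_le_add_one (G := H4 t) (v := inr 0) adj_n1_n2 (edist_le_one_of_adj adj_n0_n2.symm)
    have h := edist_le_add_one (adj_leaf_n1 hi a) h1
    exact h.trans (by norm_num)

lemma d_leaf_n1_le (i : Fin t) (a : Fin 2) :
    (H4 t).edist (inl (some (i,a))) (inr 1) ≤ 3 := by
  by_cases hi : i.val = 0
  · have h1 := edist_le_add_one (G := H4 t) (v := inr 1) adj_n0_n2 (edist_le_one_of_adj adj_n1_n2.symm)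
    have h := edist_le_add_one (adj_leaf_n0 hi a) h1
    exact h.trans (by norm_num)
  · exact (edist_le_one_of_adj (adj_leaf_n1 hi a)).trans (by norm_num)

lemma d_leaf_n2_le (i : Fin t) (a : Fin 2) :
    (H4 t).edist (inl (some (i,a))) (inr 2) ≤ 2 := by
  by_cases hi : i.val = 0
  · exact edist_le_add_one (adj_leaf_n0 hi a) (edist_le_one_of_adj adj_n0_n2)
  · exact edist_le_add_one (adj_leaf_n1 hi a) (edist_le_one_of_adj adj_n1_n2)

lemma d_leaf_n3_le (i : Fin t) (a : Fin 2) :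
    (H4 t).edist (inl (some (i,a))) (inr 3) ≤ 3 := by
  have h := edist_le_of_le_le (d_leaf_n2_le i a) (edist_le_one_of_adj adj_n2_n3)
  exact h.trans (by norm_num)

lemma d_n0_n1_le : (H4 t).edist (inr 0) (inr 1) ≤ 2 :=
  edist_le_add_one adj_n0_n2 (edist_le_one_of_adj adj_n1_n2.symm)

lemma d_n0_n3_le : (H4 t).edist (inr 0) (inr 3) ≤ 2 :=
  edist_le_add_one adj_n0_n2 (edist_le_one_of_adj adj_n2_n3)

lemma d_n1_n3_le : (H4 t).edist (inr 1) (inr 3) ≤ 2 :=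
  edist_le_add_one adj_n1_n2 (edist_le_one_of_adj adj_n2_n3)

-- lower bounds
lemma d_c_n2_ge : 3 ≤ (H4 t).edist (inl none) (inr 2) := by
  refine three_le_edist (by simp) (H4_not_adj_c_inr 2) ?_
  rintro (x | j) h1 h2
  · rcases x with - | ⟨i, a⟩
    · exact h1.ne rfl
    · exact no_leaf_n2 h2
  · exact H4_not_adj_c_inr j h1

lemma d_c_n3_ge : 4 ≤ (H4 t).edist (inl none) (inr 3) := by
  rw [SimpleGraph.edist_comm]
  refine four_le_edist (by simp) ?_
  intro w hw
  rw [uniq3 w hw]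
  rw [SimpleGraph.edist_comm]
  exact d_c_n2_ge

lemma d_leaf_n3_ge (i : Fin t) (a : Fin 2) :
    3 ≤ (H4 t).edist (inl (some (i,a))) (inr 3) := by
  refine three_le_edist (by simp) no_leaf_n3 ?_
  intro w h1 h2
  rw [uniq3 w h2.symm] at h1
  exact no_leaf_n2 h1

lemma d_n0_far_ge {i : Fin t} (hi : i.val ≠ 0) (a : Fin 2) :
    3 ≤ (H4 t).edist (inr 0) (inl (some (i,a))) := by
  refine three_le_edist (by simp) ?_ ?_
  · intro h
    rcases H4_adj_leaf_inr.mp h.symm with ⟨-, h2⟩ | ⟨h1, -⟩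
    · exact hi h2
    · exact absurd h1 (by decide)
  · rintro (x | j) h1 h2
    · rcases x with - | ⟨i', a'⟩
      · exact H4_not_adj_c_inr 0 h1.symm
      · rcases H4_adj_leaf_inr.mp h1.symm with ⟨-, h3⟩ | ⟨h3, -⟩
        · obtain ⟨rfl, -⟩ := adjG_some_some.mp (H4_adj_inl_inl.mp h2)
          exact hi h3
        · exact absurd h3 (by decide)
    · rcases H4_adj_leaf_inr.mp h2.symm with ⟨h3, h4⟩ | ⟨h3, -⟩
      · exact hi h4
      · rw [h3] at h1
        rcases H4_adj_inr_inr.mp h1 with ⟨-, h5 | h5⟩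
        · exact absurd h5 (by decide)
        · exact absurd h5 (by decide)

lemma d_n1_far_ge {i : Fin t} (hi : i.val = 0) (a : Fin 2) :
    3 ≤ (H4 t).edist (inr 1) (inl (some (i,a))) := by
  refine three_le_edist (by simp) ?_ ?_
  · intro h
    rcases H4_adj_leaf_inr.mp h.symm with ⟨h1, -⟩ | ⟨-, h2⟩
    · exact absurd h1 (by decide)
    · exact h2 hi
  · rintro (x | j) h1 h2
    · rcases x with - | ⟨i', a'⟩
      · exact H4_not_adj_c_inr 1 h1.symm
      · rcases H4_adj_leaf_inr.mp h1.symm with ⟨h3, -⟩ | ⟨-, h3⟩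
        · exact absurd h3 (by decide)
        · obtain ⟨rfl, -⟩ := adjG_some_some.mp (H4_adj_inl_inl.mp h2)
          exact h3 hi
    · rcases H4_adj_leaf_inr.mp h2.symm with ⟨h3, -⟩ | ⟨h3, h4⟩
      · rw [h3] at h1
        rcases H4_adj_inr_inr.mp h1 with ⟨-, h5 | h5⟩
        · exact absurd h5 (by decide)
        · exact absurd h5 (by decide)
      · exact h4 hi

end H4dist


section H4ecc
variable {t : ℕ}

lemma ecc_c (ht : 3 ≤ t) : ecc (H4 t) (inl none) = 4 := by
  refine le_antisymm (ecc_le_iff.mpr ?_) (d_c_n3_ge.trans edist_le_ecc)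
  rintro (x | j)
  · exact (d_c_old hind4 x).trans (by norm_num)
  · rcases fin4_cases j with rfl | rfl | rfl | rfl
    · exact (d_c_n0_le ht).trans (by norm_num)
    · exact (d_c_n1_le ht).trans (by norm_num)
    · exact (d_c_n2_le ht).trans (by norm_num)
    · exact d_c_n3_le ht

lemma ecc_leaf (i : Fin t) (a : Fin 2) : ecc (H4 t) (inl (some (i,a))) = 3 := by
  refine le_antisymm (ecc_le_iff.mpr ?_) ((d_leaf_n3_ge i a).trans edist_le_ecc)
  rintro (x | j)
  · exact (d_old_old hind4 _ _).trans (by norm_num)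
  · rcases fin4_cases j with rfl | rfl | rfl | rfl
    · exact d_leaf_n0_le i a
    · exact d_leaf_n1_le i a
    · exact (d_leaf_n2_le i a).trans (by norm_num)
    · exact d_leaf_n3_le i a

lemma ecc_n0 (ht : 3 ≤ t) : ecc (H4 t) (inr 0) = 3 := by
  refine le_antisymm (ecc_le_iff.mpr ?_)
    ((d_n0_far_ge (i := ⟨1, by omega⟩) (by simp) 0).trans edist_le_ecc)
  rintro (x | j)
  · rcases x with - | ⟨i, a⟩
    · rw [SimpleGraph.edist_comm]; exact (d_c_n0_le ht).trans (by norm_num)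
    · rw [SimpleGraph.edist_comm]; exact d_leaf_n0_le i a
  · rcases fin4_cases j with rfl | rfl | rfl | rfl
    · rw [SimpleGraph.edist_self]; norm_num
    · exact d_n0_n1_le.trans (by norm_num)
    · exact (edist_le_one_of_adj adj_n0_n2).trans (by norm_num)
    · exact d_n0_n3_le.trans (by norm_num)

lemma ecc_n1 (ht : 3 ≤ t) : ecc (H4 t) (inr 1) = 3 := by
  refine le_antisymm (ecc_le_iff.mpr ?_)
    ((d_n1_far_ge (i := ⟨0, by omega⟩) rfl 0).trans edist_le_ecc)
  rintro (x | j)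
  · rcases x with - | ⟨i, a⟩
    · rw [SimpleGraph.edist_comm]; exact (d_c_n1_le ht).trans (by norm_num)
    · rw [SimpleGraph.edist_comm]; exact d_leaf_n1_le i a
  · rcases fin4_cases j with rfl | rfl | rfl | rfl
    · rw [SimpleGraph.edist_comm]; exact d_n0_n1_le.trans (by norm_num)
    · rw [SimpleGraph.edist_self]; norm_num
    · exact (edist_le_one_of_adj adj_n1_n2).trans (by norm_num)
    · exact d_n1_n3_le.trans (by norm_num)

lemma ecc_n2 (ht : 3 ≤ t) : ecc (H4 t) (inr 2) = 3 := by
  refine le_antisymm (ecc_le_iff.mpr ?_) ?_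
  · rintro (x | j)
    · rcases x with - | ⟨i, a⟩
      · rw [SimpleGraph.edist_comm]; exact d_c_n2_le ht
      · rw [SimpleGraph.edist_comm]; exact (d_leaf_n2_le i a).trans (by norm_num)
    · rcases fin4_cases j with rfl | rfl | rfl | rfl
      · exact (edist_le_one_of_adj adj_n0_n2.symm).trans (by norm_num)
      · exact (edist_le_one_of_adj adj_n1_n2.symm).trans (by norm_num)
      · rw [SimpleGraph.edist_self]; norm_num
      · exact (edist_le_one_of_adj adj_n2_n3).trans (by norm_num)
  · refine le_trans ?_ (edist_le_ecc (v := inl none))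
    rw [SimpleGraph.edist_comm]
    exact d_c_n2_ge

lemma ecc_n3 (ht : 3 ≤ t) : ecc (H4 t) (inr 3) = 4 := by
  refine le_antisymm (ecc_le_iff.mpr ?_) ?_
  · rintro (x | j)
    · rcases x with - | ⟨i, a⟩
      · rw [SimpleGraph.edist_comm]; exact d_c_n3_le ht
      · rw [SimpleGraph.edist_comm]; exact (d_leaf_n3_le i a).trans (by norm_num)
    · rcases fin4_cases j with rfl | rfl | rfl | rfl
      · rw [SimpleGraph.edist_comm]; exact d_n0_n3_le.trans (by norm_num)
      · rw [SimpleGraph.edist_comm]; exact d_n1_n3_le.trans (by norm_num)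
      · exact (edist_le_one_of_adj adj_n2_n3.symm).trans (by norm_num)
      · rw [SimpleGraph.edist_self]; norm_num
  · refine le_trans ?_ (edist_le_ecc (v := inl none))
    rw [SimpleGraph.edist_comm]
    exact d_c_n3_ge

lemma H4_rad (ht : 3 ≤ t) : graphRadius (H4 t) = 3 := by
  refine le_antisymm ?_ (le_iInf ?_)
  · have h := iInf_le (fun u => ecc (H4 t) u) (inr 2 : Option (Fin t × Fin 2) ⊕ Fin 4)
    rw [ecc_n2 ht] at h
    exact h
  · rintro (x | j)
    · rcases x with - | ⟨i, a⟩
      · rw [ecc_c ht]; norm_num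
      · rw [ecc_leaf i a]
    · rcases fin4_cases j with rfl | rfl | rfl | rfl
      · rw [ecc_n0 ht]
      · rw [ecc_n1 ht]
      · rw [ecc_n2 ht]
      · rw [ecc_n3 ht]; norm_num

lemma H4_card (ht : 3 ≤ t) :
    {u : Option (Fin t × Fin 2) ⊕ Fin 4 | ecc (H4 t) u ≠ graphRadius (H4 t)}.ncard = 2 := by
  have hset : {u : Option (Fin t × Fin 2) ⊕ Fin 4 | ecc (H4 t) u ≠ graphRadius (H4 t)} =
      {inl none, inr 3} := by
    ext u
    simp only [Set.mem_setOf_eq, H4_rad ht, Set.mem_insert_iff, Set.mem_singleton_iff]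
    rcases u with (x | j)
    · rcases x with - | ⟨i, a⟩
      · simp [ecc_c ht]
      · simp [ecc_leaf i a]
    · rcases fin4_cases j with rfl | rfl | rfl | rfl
      · simp [ecc_n0 ht]
      · simp [ecc_n1 ht]
      · simp [ecc_n2 ht]
      · simp [ecc_n3 ht]
  rw [hset]
  exact Set.ncard_pair (by simp)

lemma H4_conn (ht : 3 ≤ t) : (H4 t).Connected := by
  have hreach : ∀ v, (H4 t).Reachable (inl none) v := by
    have r0 : (H4 t).Reachable (inl none) (inr 0) :=
      ((adj_c_leaf ((⟨0, by omega⟩ : Fin t), (0 : Fin 2))).reachable).trans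
        (adj_leaf_n0 rfl 0).reachable
    have r1 : (H4 t).Reachable (inl none) (inr 1) :=
      ((adj_c_leaf ((⟨1, by omega⟩ : Fin t), (0 : Fin 2))).reachable).trans
        (adj_leaf_n1 (by simp) 0).reachable
    have r2 : (H4 t).Reachable (inl none) (inr 2) := r0.trans adj_n0_n2.reachable
    have r3 : (H4 t).Reachable (inl none) (inr 3) := r2.trans adj_n2_n3.reachable
    rintro (x | j)
    · rcases x with - | p
      · exact Reachable.refl _
      · exact (adj_c_leaf p).reachable
    · rcases fin4_cases j with rfl | rfl | rfl | rfl
      · exact r0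
      · exact r1
      · exact r2
      · exact r3
  haveI : Nonempty (Option (Fin t × Fin 2) ⊕ Fin 4) := ⟨inl none⟩
  exact Connected.mk (fun u v => (hreach u).symm.trans (hreach v))

end H4ecc



/-- For every integer `t ≥ 3`, the 3-ASC index of `K_1 ⊕ tP_2` equals 4. -/
theorem theta_three_K1_join_tP2 (t : ℕ) (ht : 3 ≤ t) :
    theta 3 (K1JoinTP2 t) = 4 := by
  have hmem : 4 ∈ {k : ℕ | ∃ H : SimpleGraph (Option (Fin t × Fin 2) ⊕ Fin k),
      IsASC 3 H ∧ ∀ u v, H.Adj (Sum.inl u) (Sum.inl v) ↔ (K1JoinTP2 t).Adj u v} := by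
    refine ⟨H4 t, ⟨H4_conn ht, ?_, H4_card ht⟩, hind4⟩
    rw [H4_rad ht]
    norm_num
  have hlow : ∀ k ∈ {k : ℕ | ∃ H : SimpleGraph (Option (Fin t × Fin 2) ⊕ Fin k),
      IsASC 3 H ∧ ∀ u v, H.Adj (Sum.inl u) (Sum.inl v) ↔ (K1JoinTP2 t).Adj u v}, 4 ≤ k := by
    rintro k ⟨H, ⟨hconn, hrad', hcard⟩, hind⟩
    have hrad : graphRadius H = 3 := by
      rw [hrad']; norm_num
    by_contra hk
    push_neg at hk
    interval_cases k
    · exact no0 hrad hind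
    · exact no1 hconn hrad hind
    · exact no2 hconn hrad hind
    · exact no3 ht hconn hrad hcard hind
  exact le_antisymm (Nat.sInf_le hmem) (le_csInf ⟨4, hmem⟩ hlow)



end AscPaper
end
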